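/- arXiv:2302.13182 — 4 statements merged into one kernel-verified Lean document; each statement's English description precedes it below -/
import Mathlib

section
/- (Existence of C^r conjugacy between exactly ℓ-flat expanding vector fields.) Let ℓ ≥ 1 and 1 ≤ r ≤ ℓ, and let X, Y be real-valued functions of class C^{ℓ+r} on intervals [0,ε_X) and [0,ε_Y) respectively, with X(x) = α·x^{ℓ+1} + o(x^{ℓ+1}) and Y(x) = β·x^{ℓ+1} + o(x^{ℓ+1}) as x → 0⁺, where α > 0 and β > 0 (both vector fields are exactly ℓ-flat and expanding). Then there exist δ > 0 and a map h : [0,δ) → ℝ of class C^r with h(0) = 0 and h'(0) > 0 such that h'(x)·X(x) = Y(h(x)) for all x ∈ [0,δ). -/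
open Set Filter Topology intervalIntegral MeasureTheory

namespace Stmt15Aux

lemma contDiffOn_step {e : ℝ} {m : ℕ} {f φ : ℝ → ℝ}
    (hφ : ContDiffOn ℝ m φ (Ico 0 e))
    (hd : ∀ x ∈ Ico (0:ℝ) e, HasDerivWithinAt f (φ x) (Ico 0 e) x) :
    ContDiffOn ℝ (m+1) f (Ico 0 e) := by
  have hu := uniqueDiffOn_Ico (0:ℝ) e
  rw [contDiffOn_succ_iff_derivWithin hu]
  refine ⟨fun x hx => (hd x hx).differentiableWithinAt, by simp, ?_⟩
  exact hφ.congr fun x hx => ((hd x hx).derivWithin (hu x hx))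

lemma mem_nhds_of_Ioo {e x : ℝ} (hx : x ∈ Ioo (0:ℝ) e) : Ico (0:ℝ) e ∈ 𝓝 x :=
  mem_of_superset (Ioo_mem_nhds hx.1 hx.2) Ioo_subset_Ico_self

lemma cont_at {e x : ℝ} {w : ℝ → ℝ} (hw : ContinuousOn w (Ico 0 e)) (hx : x ∈ Ioo (0:ℝ) e) :
    ContinuousAt w x :=
  hw.continuousAt (mem_nhds_of_Ioo hx)

lemma smf {e x : ℝ} {w : ℝ → ℝ} (hw : ContinuousOn w (Ico 0 e)) (hx : x ∈ Ioo (0:ℝ) e) :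
    StronglyMeasurableAtFilter w (𝓝 x) :=
  ⟨Ioo 0 e, Ioo_mem_nhds hx.1 hx.2,
    ((hw.mono Ioo_subset_Ico_self).aestronglyMeasurable measurableSet_Ioo)⟩

lemma ftc_right {e x : ℝ} {w : ℝ → ℝ} (hw : ContinuousOn w (Ico 0 e)) (hx : x ∈ Ioo (0:ℝ) e) :
    HasDerivAt (fun t => ∫ s in (0:ℝ)..t, w s) (w x) x := by
  refine intervalIntegral.integral_hasDerivAt_right ?_ (smf hw hx) (cont_at hw hx)
  exact (hw.mono (by rw [uIcc_of_le hx.1.le]; exact Icc_subset_Ico_right hx.2)).intervalIntegrable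

lemma ftc_left {e a0 x : ℝ} (ha0 : a0 ∈ Ioo (0:ℝ) e) {w : ℝ → ℝ}
    (hw : ContinuousOn w (Ico 0 e)) (hx : x ∈ Ioo (0:ℝ) e) :
    HasDerivAt (fun t => ∫ s in t..a0, w s) (-w x) x := by
  refine intervalIntegral.integral_hasDerivAt_left ?_ (smf hw hx) (cont_at hw hx)
  refine (hw.mono ?_).intervalIntegrable
  exact ((ordConnected_Ioo).uIcc_subset hx ha0).trans Ioo_subset_Ico_self

end Stmt15Aux

namespace Stmt15Aux

noncomputable def Bfun (k : ℕ) (v : ℝ → ℝ) : ℝ → ℝ :=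
  fun x => if x ≤ 0 then v 0 else (∫ s in (0:ℝ)..x, s^k * v s) * (k+1) / x^(k+1)

lemma Bfun_pos {k : ℕ} {v : ℝ → ℝ} {x : ℝ} (hx : 0 < x) :
    Bfun k v x = (∫ s in (0:ℝ)..x, s^k * v s) * (k+1) / x^(k+1) := by
  simp [Bfun, not_le.mpr hx]

lemma Bfun_zero (k : ℕ) (v : ℝ → ℝ) : Bfun k v 0 = v 0 := by simp [Bfun]

lemma integrand_cont {e : ℝ} {k : ℕ} {v : ℝ → ℝ} (hv : ContinuousOn v (Ico 0 e)) :
    ContinuousOn (fun s => s^k * v s) (Ico 0 e) :=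
  (continuous_pow k).continuousOn.mul hv

lemma Icc_sub_Ico {e t : ℝ} (ht : 0 ≤ t) (hte : t < e) : Icc (0:ℝ) t ⊆ Ico 0 e :=
  fun s hs => ⟨hs.1, lt_of_le_of_lt hs.2 hte⟩

lemma integrable_sub {e t : ℝ} (ht : 0 ≤ t) (hte : t < e) {k : ℕ} {v : ℝ → ℝ}
    (hv : ContinuousOn v (Ico 0 e)) :
    IntervalIntegrable (fun s => s^k * v s) volume 0 t :=
  ((integrand_cont hv).mono (by rw [uIcc_of_le ht]; exact Icc_sub_Ico ht hte)).intervalIntegrable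

/-- Basic estimate: if `|v s - c| ≤ M` on `(0,t]` then `|Bfun k v t - c| ≤ M`. -/
lemma Bfun_est {e t : ℝ} (ht : 0 < t) (hte : t < e) {k : ℕ} {v : ℝ → ℝ}
    (hv : ContinuousOn v (Ico 0 e)) {c M : ℝ}
    (hM : ∀ s ∈ Ioc (0:ℝ) t, |v s - c| ≤ M) : |Bfun k v t - c| ≤ M := by
  have hM0 : 0 ≤ M := le_trans (abs_nonneg _) (hM t ⟨ht, le_refl _⟩)
  have hxpow : (0:ℝ) < t^(k+1) := pow_pos ht _
  have hintc : IntervalIntegrable (fun s => s^k * c) volume 0 t :=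
    (Continuous.continuousOn (by continuity)).intervalIntegrable
  have hconst : (∫ s in (0:ℝ)..t, s^k * c) = t^(k+1)/(k+1) * c := by
    rw [intervalIntegral.integral_mul_const, integral_pow]
    norm_num
  have hcval : c = (∫ s in (0:ℝ)..t, s^k * c) * (k+1) / t^(k+1) := by
    rw [hconst]; field_simp
  rw [Bfun_pos ht, hcval]
  rw [div_sub_div_same, ← sub_mul, ← intervalIntegral.integral_sub (integrable_sub ht.le hte hv) hintc]
  rw [abs_div, abs_of_pos hxpow, div_le_iff₀ hxpow]
  have habs : |(∫ s in (0:ℝ)..t, (s^k * v s - s^k * c)) * ((k:ℝ)+1)|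
      = |∫ s in (0:ℝ)..t, (s^k * v s - s^k * c)| * ((k:ℝ)+1) := by
    rw [abs_mul]; congr 1; rw [abs_of_pos]; positivity
  rw [habs]
  have hbd : |∫ s in (0:ℝ)..t, (s^k * v s - s^k * c)| ≤ M * t^(k+1)/(k+1) := by
    have := intervalIntegral.norm_integral_le_of_norm_le
      (g := fun s => s^k * M) (f := fun s => s^k * v s - s^k * c) (μ := volume) (a := 0) (b := t)
      ht.le ?_ ?_
    · rw [Real.norm_eq_abs] at this
      refine le_trans this (le_of_eq ?_)
      rw [intervalIntegral.integral_mul_const, integral_pow,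
        zero_pow (Nat.succ_ne_zero k), sub_zero]
      push_cast; ring
    · refine Filter.Eventually.of_forall ?_
      intro s hs
      rw [← mul_sub, Real.norm_eq_abs, abs_mul, abs_of_nonneg (pow_nonneg hs.1.le k)]
      exact mul_le_mul_of_nonneg_left (hM s hs) (pow_nonneg hs.1.le k)
    · exact (((continuous_pow k).mul continuous_const).continuousOn).intervalIntegrable
  calc |∫ s in (0:ℝ)..t, (s^k * v s - s^k * c)| * ((k:ℝ)+1)
      ≤ (M * t^(k+1)/(k+1)) * ((k:ℝ)+1) := by
        exact mul_le_mul_of_nonneg_right hbd (by positivity)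
    _ = M * t^(k+1) := by field_simp

end Stmt15Aux

namespace Stmt15Aux

lemma Bfun_contOn {e : ℝ} (he : 0 < e) {k : ℕ} {v : ℝ → ℝ}
    (hv : ContinuousOn v (Ico 0 e)) : ContinuousOn (Bfun k v) (Ico 0 e) := by
  intro x hx
  rcases eq_or_lt_of_le hx.1 with h0 | h0
  · rw [ContinuousWithinAt, ← h0, Bfun_zero]
    rw [Metric.tendsto_nhdsWithin_nhds]
    intro ε hε
    obtain ⟨δ, hδ, hδ2⟩ := Metric.continuousWithinAt_iff.1 (hv 0 ⟨le_refl _, he⟩)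
      (ε/2) (by linarith)
    refine ⟨δ, hδ, fun {t} ht hdist => ?_⟩
    rcases le_or_gt t 0 with h1 | h1
    · have ht0 : t = 0 := le_antisymm h1 ht.1
      simp [ht0, Bfun_zero, hε]
    · have htδ : t < δ := by
        rw [Real.dist_eq, sub_zero, abs_of_pos h1] at hdist; exact hdist
      have key : |Bfun k v t - v 0| ≤ ε/2 := by
        refine Bfun_est h1 ht.2 hv fun s hs => ?_
        have hse : s ∈ Ico 0 e := ⟨hs.1.le, hs.2.trans_lt ht.2⟩
        have hds : dist s 0 < δ := by
          rw [Real.dist_eq, sub_zero, abs_of_pos hs.1]; exact hs.2.trans_lt htδ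
        have := hδ2 hse hds
        rw [Real.dist_eq] at this
        exact this.le
      rw [Real.dist_eq]
      have : |Bfun k v t - v 0| < ε := lt_of_le_of_lt key (by linarith)
      exact this
  · have hxI : x ∈ Ioo 0 e := ⟨h0, hx.2⟩
    refine ContinuousAt.continuousWithinAt ?_
    have heq : Bfun k v =ᶠ[𝓝 x] fun t => (∫ s in (0:ℝ)..t, s^k * v s) * (k+1) / t^(k+1) := by
      filter_upwards [Ioi_mem_nhds h0] with t ht
      exact Bfun_pos ht
    rw [continuousAt_congr heq]
    have h1 : ContinuousAt (fun t => ∫ s in (0:ℝ)..t, s^k * v s) x :=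
      (ftc_right (integrand_cont hv) hxI).continuousAt
    exact (h1.mul continuousAt_const).div ((continuous_pow _).continuousAt)
      (by positivity)

lemma bsmooth (m : ℕ) : ∀ (k : ℕ) (e : ℝ), 0 < e → ∀ v : ℝ → ℝ,
    ContDiffOn ℝ m v (Ico 0 e) → ContDiffOn ℝ m (Bfun k v) (Ico 0 e) := by
  induction m with
  | zero =>
    intro k e he v hv
    rw [show ((0:ℕ) : WithTop ℕ∞) = 0 from rfl, contDiffOn_zero] at *
    exact Bfun_contOn he hv
  | succ m IH =>
    intro k e he v hv
    have hu := uniqueDiffOn_Ico (0:ℝ) e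
    set v' : ℝ → ℝ := derivWithin v (Ico 0 e) with hv'def
    have hv' : ContDiffOn ℝ m v' (Ico 0 e) := hv.derivWithin hu (by exact_mod_cast le_refl _)
    have hvc : ContinuousOn v (Ico 0 e) := hv.continuousOn
    have hv'c : ContinuousOn v' (Ico 0 e) := hv'.continuousOn
    set G : ℝ → ℝ := Bfun (k+1) v' with hGdef
    have hG : ContDiffOn ℝ m G (Ico 0 e) := IH (k+1) e he v' hv'
    have hGc : ContinuousOn G (Ico 0 e) := hG.continuousOn
    have hvd : ∀ x ∈ Ico (0:ℝ) e, HasDerivWithinAt v (v' x) (Ico 0 e) x := fun x hx =>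
      (hv.differentiableOn (by simp) x hx).hasDerivWithinAt
    -- integration by parts
    have parts : ∀ x ∈ Ioo (0:ℝ) e, (∫ s in (0:ℝ)..x, s^(k+1) * v' s)
        = x^(k+1) * v x - (k+1) * ∫ s in (0:ℝ)..x, s^k * v s := by
      intro x hx
      have hint1 : IntervalIntegrable (fun s => (k+1) * s^k * v s) volume 0 x := by
        have : ContinuousOn (fun s => (k+1) * s^k * v s) (Ico 0 e) :=
          (continuousOn_const.mul (continuous_pow k).continuousOn).mul hvc
        exact (this.mono (by rw [uIcc_of_le hx.1.le]; exact Icc_sub_Ico hx.1.le hx.2)).intervalIntegrable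
      have hint2 : IntervalIntegrable (fun s => s^(k+1) * v' s) volume 0 x :=
        integrable_sub hx.1.le hx.2 hv'c
      have hFTC : (∫ s in (0:ℝ)..x, ((k+1) * s^k * v s + s^(k+1) * v' s))
          = x^(k+1) * v x - 0^(k+1) * v 0 := by
        refine intervalIntegral.integral_eq_sub_of_hasDeriv_right_of_le hx.1.le
          (f := fun s => s^(k+1) * v s) ?_ ?_ (hint1.add hint2)
        · exact (integrand_cont hvc).mono (Icc_sub_Ico hx.1.le hx.2)
        · intro s hs
          have hsI : s ∈ Ioo (0:ℝ) e := ⟨hs.1, hs.2.trans hx.2⟩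
          have hvds : HasDerivAt v (v' s) s :=
            (hvd s ⟨hsI.1.le, hsI.2⟩).hasDerivAt (mem_nhds_of_Ioo hsI)
          have := (hasDerivAt_pow (k+1) s).mul hvds
          simp only [Nat.add_sub_cancel] at this
          have h2 : HasDerivAt (fun s => s^(k+1) * v s)
              ((k+1) * s^k * v s + s^(k+1) * v' s) s := by
            exact this.congr_deriv (by push_cast; ring)
          exact h2.hasDerivWithinAt
      rw [intervalIntegral.integral_add hint1 hint2] at hFTC
      have hmul : (∫ s in (0:ℝ)..x, (k+1) * s^k * v s)
          = (k+1) * ∫ s in (0:ℝ)..x, s^k * v s := by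
        rw [← intervalIntegral.integral_const_mul]
        congr 1; ext s; ring
      rw [hmul] at hFTC
      rw [zero_pow (Nat.succ_ne_zero k)] at hFTC
      linarith [hFTC]
    -- key identity
    have hBeq : ∀ x ∈ Ico (0:ℝ) e, Bfun k v x = v x - x * G x / (k+2) := by
      intro x hx
      rcases eq_or_lt_of_le hx.1 with h0 | h0
      · rw [← h0, Bfun_zero]; ring
      · rw [Bfun_pos h0, hGdef, Bfun_pos h0, parts x ⟨h0, hx.2⟩]
        have hx0 : x ≠ 0 := ne_of_gt h0
        field_simp
        push_cast
        ring
    -- derivative of W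
    have hWd : ∀ x ∈ Ico (0:ℝ) e, HasDerivWithinAt (fun t => t * G t / (k+2))
        (v' x - (k+1) * G x / (k+2)) (Ico 0 e) x := by
      intro x hx
      rcases eq_or_lt_of_le hx.1 with h0 | h0
      · rw [← h0]
        rw [hasDerivWithinAt_iff_tendsto_slope]
        have hslope : ∀ t ∈ Ico (0:ℝ) e \ {(0:ℝ)},
            slope (fun t => t * G t / (k+2)) 0 t = G t / (k+2) := by
          intro t ht
          have ht0 : t ≠ 0 := ht.2
          rw [slope_def_field]
          field_simp
          ring
        have hlim : Tendsto (fun t => G t / (k+2)) (𝓝[Ico (0:ℝ) e \ {0}] 0)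
            (𝓝 (G 0 / (k+2))) := by
          have : ContinuousWithinAt G (Ico 0 e) 0 := hGc 0 ⟨le_refl _, he⟩
          exact (this.mono diff_subset).div_const _
        have hval : G 0 / (k+2) = v' 0 - (k+1) * G 0 / (k+2) := by
          have : G 0 = v' 0 := Bfun_zero (k+1) v'
          rw [this]; field_simp; ring
        rw [← hval]
        exact Tendsto.congr' (by
          filter_upwards [self_mem_nhdsWithin] with t ht
          exact (hslope t ht).symm) hlim
      · have hxI : x ∈ Ioo 0 e := ⟨h0, hx.2⟩
        have hx0 : x ≠ 0 := ne_of_gt h0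
        have hI : HasDerivAt (fun t => ∫ s in (0:ℝ)..t, s^(k+1) * v' s)
            (x^(k+1) * v' x) x := ftc_right (integrand_cont hv'c) hxI
        have hpow : HasDerivAt (fun t : ℝ => (t^(k+1))⁻¹)
            (-((k+1) * x^k) / (x^(k+1))^2) x := by
          have := (hasDerivAt_pow (k+1) x).inv (pow_ne_zero _ hx0)
          simpa [Nat.add_sub_cancel, Pi.inv_def] using this
        have hprod := hI.mul hpow
        have heq : (fun t => t * G t / (k+2)) =ᶠ[𝓝 x]
            (fun t => (∫ s in (0:ℝ)..t, s^(k+1) * v' s) * (t^(k+1))⁻¹) := by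
          filter_upwards [Ioi_mem_nhds h0] with t ht
          rw [hGdef, Bfun_pos ht]
          have ht0 : (t:ℝ) ≠ 0 := ne_of_gt ht
          field_simp
          push_cast
          ring
        have h2 : HasDerivAt (fun t => t * G t / (k+2))
            (x^(k+1) * v' x * (x^(k+1))⁻¹
              + (∫ s in (0:ℝ)..x, s^(k+1) * v' s) * (-((k+1) * x^k) / (x^(k+1))^2)) x :=
          hprod.congr_of_eventuallyEq heq
        have h3 : x^(k+1) * v' x * (x^(k+1))⁻¹
              + (∫ s in (0:ℝ)..x, s^(k+1) * v' s) * (-((k+1) * x^k) / (x^(k+1))^2)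
            = v' x - (k+1) * G x / (k+2) := by
          rw [hGdef, Bfun_pos h0]
          field_simp
          push_cast
          ring
        rw [h3] at h2
        exact h2.hasDerivWithinAt
    have hφ : ContDiffOn ℝ m (fun x => v' x - (k+1) * G x / (k+2)) (Ico 0 e) :=
      hv'.sub ((contDiffOn_const.mul hG).div_const _)
    have hW : ContDiffOn ℝ (m+1) (fun t => t * G t / (k+2)) (Ico 0 e) :=
      contDiffOn_step hφ hWd
    have hB : ContDiffOn ℝ (m+1) (fun x => v x - x * G x / (k+2)) (Ico 0 e) := hv.sub hW
    exact hB.congr hBeq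

end Stmt15Aux

namespace Stmt15Aux

lemma ftc_left' {e a0 x : ℝ} (ha0 : a0 ∈ Ioo (0:ℝ) e) {w : ℝ → ℝ}
    (hw : ContinuousOn w (Ioo 0 e)) (hx : x ∈ Ioo (0:ℝ) e) :
    HasDerivAt (fun t => ∫ s in t..a0, w s) (-w x) x := by
  refine intervalIntegral.integral_hasDerivAt_left ?_
    ⟨Ioo 0 e, Ioo_mem_nhds hx.1 hx.2, hw.aestronglyMeasurable measurableSet_Ioo⟩
    (hw.continuousAt (Ioo_mem_nhds hx.1 hx.2))
  exact (hw.mono ((ordConnected_Ioo).uIcc_subset hx ha0)).intervalIntegrable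

noncomputable def Afun (L : ℕ) (a0 : ℝ) (w : ℝ → ℝ) : ℝ → ℝ :=
  fun x => if x ≤ 0 then w 0 else (∫ s in x..a0, w s / s^(L+2)) * (L+1) * x^(L+1)

lemma Afun_pos {L : ℕ} {a0 : ℝ} {w : ℝ → ℝ} {x : ℝ} (hx : 0 < x) :
    Afun L a0 w x = (∫ s in x..a0, w s / s^(L+2)) * (L+1) * x^(L+1) := by
  simp [Afun, not_le.mpr hx]

lemma Afun_zero (L : ℕ) (a0 : ℝ) (w : ℝ → ℝ) : Afun L a0 w 0 = w 0 := by simp [Afun]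

lemma aintegrand_cont {e : ℝ} {L : ℕ} {w : ℝ → ℝ} (hw : ContinuousOn w (Ico 0 e)) :
    ContinuousOn (fun s => w s / s^(L+1)) (Ioo 0 e) :=
  (hw.mono Ioo_subset_Ico_self).div (continuous_pow _).continuousOn
    (fun s hs => pow_ne_zero _ (ne_of_gt hs.1))

lemma aintegrable {e t b : ℝ} (ht : 0 < t) (htb : t ≤ b) (hbe : b < e) {L : ℕ} {w : ℝ → ℝ}
    (hw : ContinuousOn w (Ico 0 e)) :
    IntervalIntegrable (fun s => w s / s^(L+1)) volume t b := by
  refine ((aintegrand_cont hw).mono ?_).intervalIntegrable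
  rw [uIcc_of_le htb]
  exact fun s hs => ⟨lt_of_lt_of_le ht hs.1, lt_of_le_of_lt hs.2 hbe⟩

lemma int_inv_pow {L : ℕ} {t b : ℝ} (ht : 0 < t) (htb : t ≤ b) :
    ∫ s in t..b, (s^(L+1))⁻¹ = ((t^L)⁻¹ - (b^L)⁻¹)/L ∨ L = 0 := by
  rcases Nat.eq_zero_or_pos L with h|h
  · exact Or.inr h
  left
  have hb : (0:ℝ) < b := lt_of_lt_of_le ht htb
  have h0 : (0:ℝ) ∉ uIcc t b := by
    rw [uIcc_of_le htb]; intro hc; exact absurd hc.1 (not_le.mpr ht)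
  have hzpow : ∀ s ∈ uIcc t b, (s^(L+1))⁻¹ = s^(-(L:ℤ)-1) := by
    intro s hs
    rw [uIcc_of_le htb] at hs
    have hs0 : s ≠ 0 := ne_of_gt (lt_of_lt_of_le ht hs.1)
    rw [show (-(L:ℤ)-1) = -((L:ℤ)+1) by ring, zpow_neg, ← zpow_natCast s (L+1)]
    push_cast
    ring_nf
  rw [intervalIntegral.integral_congr (g := fun s => s^(-(L:ℤ)-1)) hzpow]
  rw [integral_zpow (Or.inr ⟨by omega, h0⟩)]
  have h1 : (-(L:ℤ)-1) + 1 = -(L:ℤ) := by ring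
  rw [h1]
  rw [zpow_neg, zpow_neg, zpow_natCast, zpow_natCast]
  push_cast
  have hL : (L:ℝ) ≠ 0 := Nat.cast_ne_zero.mpr (by omega)
  rw [show (-(L:ℝ)-1+1) = -(L:ℝ) by ring]
  field_simp
  ring

end Stmt15Aux

namespace Stmt15Aux

lemma abound {e : ℝ} {P : ℕ} (hP : 1 ≤ P) {t d : ℝ} (ht : 0 < t) (htd : t ≤ d) (hde : d < e)
    {u : ℝ → ℝ} (hu : ContinuousOn u (Ico 0 e)) {M : ℝ}
    (hM : ∀ s ∈ Icc t d, |u s| ≤ M) :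
    |∫ s in t..d, u s / s^(P+1)| ≤ M * (t^P)⁻¹ / P := by
  have hM0 : 0 ≤ M := le_trans (abs_nonneg _) (hM t ⟨le_refl _, htd⟩)
  have key := intervalIntegral.norm_integral_le_of_norm_le
    (f := fun s => u s / s^(P+1)) (g := fun s => M * (s^(P+1))⁻¹) (μ := volume) (a := t) (b := d)
    htd ?_ ?_
  · rw [Real.norm_eq_abs] at key
    refine le_trans key ?_
    rw [intervalIntegral.integral_const_mul]
    rcases int_inv_pow (L := P) ht htd with h|h
    · rw [h]
      have hd : (0:ℝ) < d := lt_of_lt_of_le ht htd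
      have hPpos : (0:ℝ) < P := by exact_mod_cast Nat.lt_of_lt_of_le Nat.zero_lt_one hP
      have h2 : (d^P)⁻¹ ≤ (t^P)⁻¹ := by
        apply inv_anti₀ (pow_pos ht P)
        exact pow_le_pow_left₀ ht.le htd P
      have h1 : M * (((t^P)⁻¹ - (d^P)⁻¹)/P) ≤ M * ((t^P)⁻¹/P) := by
        apply mul_le_mul_of_nonneg_left _ hM0
        apply div_le_div_of_nonneg_right _ hPpos.le
        simp only [sub_le_self_iff]
        exact inv_nonneg.mpr (pow_nonneg hd.le P)
      refine le_trans (le_abs_self _) ?_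
      calc |M * (((t^P)⁻¹ - (d^P)⁻¹)/P)| = M * (((t^P)⁻¹ - (d^P)⁻¹)/P) := by
            rw [abs_of_nonneg]
            exact mul_nonneg hM0 (div_nonneg (sub_nonneg.mpr h2) hPpos.le)
        _ ≤ M * (t^P)⁻¹ / P := by rw [mul_div_assoc] at *; exact h1
    · omega
  · refine Filter.Eventually.of_forall ?_
    intro s hs
    have hs0 : 0 < s := lt_trans ht hs.1
    rw [div_eq_mul_inv, Real.norm_eq_abs, abs_mul, abs_inv, abs_of_nonneg (pow_nonneg hs0.le _),
      mul_comm, mul_comm M _]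
    exact mul_le_mul_of_nonneg_left (hM s ⟨hs.1.le, hs.2⟩) (by positivity)
  · have : ContinuousOn (fun s => M * (s^(P+1))⁻¹) (Icc t d) := by
      apply continuousOn_const.mul
      apply ContinuousOn.inv₀ (continuous_pow _).continuousOn
      intro s hs
      exact pow_ne_zero _ (ne_of_gt (lt_of_lt_of_le ht hs.1))
    exact (this.mono (by rw [uIcc_of_le htd])).intervalIntegrable

end Stmt15Aux

namespace Stmt15Aux

lemma Afun_tendsto_zero {e a0 : ℝ} (ha0 : 0 < a0) (ha0e : a0 < e) {L : ℕ}
    {w : ℝ → ℝ} (hw : ContinuousOn w (Ico 0 e)) :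
    Tendsto (Afun L a0 w) (𝓝[Ico 0 e] 0) (𝓝 (w 0)) := by
  have he : 0 < e := lt_trans ha0 ha0e
  rw [Metric.tendsto_nhdsWithin_nhds]
  intro ε hε
  set c := w 0 with hcdef
  obtain ⟨δ₁, hδ₁, hδ₁2⟩ := Metric.continuousWithinAt_iff.1 (hw 0 ⟨le_refl _, he⟩)
    (ε/4) (by linarith)
  set δ := min (δ₁/2) a0 with hδdef
  have hδ0 : 0 < δ := lt_min (by linarith) ha0
  have hδa0 : δ ≤ a0 := min_le_right _ _
  have hδδ₁ : δ < δ₁ := lt_of_le_of_lt (min_le_left _ _) (by linarith)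
  have hδe : δ < e := lt_of_le_of_lt hδa0 ha0e
  set C := ∫ s in δ..a0, w s / s^(L+2) with hCdef
  set K1 : ℝ := (L+1) * |C| + |c| * (δ^(L+1))⁻¹ with hK1
  have hK10 : 0 ≤ K1 := by positivity
  refine ⟨min (min δ 1) (ε/(4*(K1+1))), by positivity, fun {t} htmem hdist => ?_⟩
  rcases le_or_gt t 0 with h1 | h1
  · have ht0 : t = 0 := le_antisymm h1 htmem.1
    simpa [ht0, Afun_zero, ← hcdef] using hε
  rw [Real.dist_eq, sub_zero, abs_of_pos h1] at hdist
  have htδ : t < δ := lt_of_lt_of_le hdist ((min_le_left _ _).trans (min_le_left _ _))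
  have ht1 : t ≤ 1 := le_of_lt (lt_of_lt_of_le hdist ((min_le_left _ _).trans (min_le_right _ _)))
  have htK : t * (K1+1) < ε/4 := by
    have h2 := lt_of_lt_of_le hdist (min_le_right _ _)
    rw [lt_div_iff₀ (by positivity : (0:ℝ) < 4*(K1+1))] at h2
    ring_nf at h2 ⊢
    linarith
  -- split the integral
  have hsplit : (∫ s in t..a0, w s / s^(L+2))
      = (∫ s in t..δ, w s / s^(L+2)) + C := by
    rw [hCdef]
    exact (intervalIntegral.integral_add_adjacent_intervals
      (aintegrable (L := L+1) h1 htδ.le hδe hw)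
      (aintegrable (L := L+1) hδ0 hδa0 ha0e hw)).symm
  -- constant integral
  have hconst : (∫ s in t..δ, c / s^(L+2)) = c * (((t^(L+1))⁻¹ - (δ^(L+1))⁻¹)/(L+1)) := by
    simp_rw [div_eq_mul_inv]
    rw [intervalIntegral.integral_const_mul]
    rcases int_inv_pow (L := L+1) h1 htδ.le with h|h
    · rw [h]; push_cast; ring_nf
    · omega
  have hwint : IntervalIntegrable (fun s => w s/s^(L+2)) volume t δ :=
    aintegrable (L := L+1) h1 htδ.le hδe hw
  have hcint : IntervalIntegrable (fun s => c/s^(L+2)) volume t δ := by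
    refine (ContinuousOn.intervalIntegrable ?_)
    apply continuousOn_const.div (continuous_pow _).continuousOn
    intro s hs
    rw [uIcc_of_le htδ.le] at hs
    exact pow_ne_zero _ (ne_of_gt (lt_of_lt_of_le h1 hs.1))
  set I1 := ∫ s in t..δ, (w s - c) / s^(L+2) with hI1def
  have hI1 : I1 = (∫ s in t..δ, w s/s^(L+2)) - c * (((t^(L+1))⁻¹ - (δ^(L+1))⁻¹)/(L+1)) := by
    rw [hI1def, ← hconst, ← intervalIntegral.integral_sub hwint hcint]
    congr 1; ext s; rw [div_sub_div_same]
  -- the key bound on I1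
  have hbnd : ∀ s ∈ Icc t δ, |w s - c| ≤ ε/4 := by
    intro s hs
    have hse : s ∈ Ico 0 e := ⟨le_trans h1.le hs.1, lt_of_le_of_lt hs.2 hδe⟩
    have hds : dist s 0 < δ₁ := by
      rw [Real.dist_eq, sub_zero, abs_of_nonneg (le_trans h1.le hs.1)]
      exact lt_of_le_of_lt hs.2 hδδ₁
    have := hδ₁2 hse hds
    rw [Real.dist_eq] at this
    exact this.le
  have hI1bd : |I1| ≤ (ε/4) * (t^(L+1))⁻¹ / ((L:ℝ)+1) := by
    have h := abound (P := L+1) (by omega) h1 htδ.le hδe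
      (u := fun s => w s - c) (hw.sub continuousOn_const) hbnd
    push_cast at h
    exact h
  -- expression for Afun - c
  have hq : Afun L a0 w t - c
      = I1 * (L+1) * t^(L+1) + C * (L+1) * t^(L+1) - c * t^(L+1) * (δ^(L+1))⁻¹ := by
    rw [Afun_pos h1, hsplit, hI1]
    have htpow : (0:ℝ) < t^(L+1) := pow_pos h1 _
    field_simp
    ring
  rw [Real.dist_eq, hq]
  have hb1 : |I1 * (L+1) * t^(L+1)| ≤ ε/4 := by
    rw [abs_mul, abs_mul]
    have h3 : |I1| * |((L:ℝ)+1)| * |t^(L+1)|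
        ≤ ((ε/4) * (t^(L+1))⁻¹ / (L+1)) * ((L:ℝ)+1) * t^(L+1) := by
      have e1 : |((L:ℝ)+1)| = (L:ℝ)+1 := abs_of_pos (by positivity)
      have e2 : |t^(L+1)| = t^(L+1) := abs_of_pos (pow_pos h1 _)
      rw [e1, e2]
      apply mul_le_mul_of_nonneg_right _ (pow_pos h1 _).le
      exact mul_le_mul_of_nonneg_right hI1bd (by positivity)
    refine le_trans h3 (le_of_eq ?_)
    have htpow : (t:ℝ)^(L+1) ≠ 0 := ne_of_gt (pow_pos h1 _)
    field_simp
  have hb2 : |C * (L+1) * t^(L+1)| + |c * t^(L+1) * (δ^(L+1))⁻¹| ≤ t * K1 := by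
    have htp : t^(L+1) ≤ t := by
      calc t^(L+1) ≤ t^1 := pow_le_pow_of_le_one h1.le ht1 (by omega)
      _ = t := pow_one t
    have htpos : 0 ≤ t^(L+1) := (pow_pos h1 _).le
    rw [abs_mul, abs_mul, abs_mul, abs_mul]
    rw [abs_of_pos (pow_pos h1 (L+1)), abs_of_pos (by positivity : (0:ℝ) < (L:ℝ)+1),
      abs_of_pos (by positivity : (0:ℝ) < (δ^(L+1))⁻¹)]
    rw [hK1]
    calc |C| * ((L:ℝ)+1) * t^(L+1) + |c| * t^(L+1) * (δ^(L+1))⁻¹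
        = t^(L+1) * (((L:ℝ)+1) * |C| + |c| * (δ^(L+1))⁻¹) := by ring
      _ ≤ t * (((L:ℝ)+1) * |C| + |c| * (δ^(L+1))⁻¹) := by
          apply mul_le_mul_of_nonneg_right htp (by positivity)
  calc |I1 * (L+1) * t^(L+1) + C * (L+1) * t^(L+1) - c * t^(L+1) * (δ^(L+1))⁻¹|
      ≤ |I1 * (L+1) * t^(L+1)| + |C * (L+1) * t^(L+1)| + |c * t^(L+1) * (δ^(L+1))⁻¹| := by
        exact (abs_sub _ _).trans (by gcongr; exact abs_add_le _ _)
    _ ≤ ε/4 + t * K1 := by linarith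
    _ < ε := by nlinarith [htK, hK10, h1]

end Stmt15Aux

namespace Stmt15Aux

lemma Afun_contOn {e a0 : ℝ} (ha0 : 0 < a0) (ha0e : a0 < e) {L : ℕ}
    {w : ℝ → ℝ} (hw : ContinuousOn w (Ico 0 e)) :
    ContinuousOn (Afun L a0 w) (Ico 0 e) := by
  have he : 0 < e := lt_trans ha0 ha0e
  intro x hx
  rcases eq_or_lt_of_le hx.1 with h0 | h0
  · rw [ContinuousWithinAt, ← h0, Afun_zero]
    exact Afun_tendsto_zero ha0 ha0e hw
  · have hxI : x ∈ Ioo 0 e := ⟨h0, hx.2⟩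
    refine ContinuousAt.continuousWithinAt ?_
    have heq : Afun L a0 w =ᶠ[𝓝 x]
        fun t => (∫ s in t..a0, w s / s^(L+2)) * (L+1) * t^(L+1) := by
      filter_upwards [Ioi_mem_nhds h0] with t ht
      exact Afun_pos ht
    rw [continuousAt_congr heq]
    have h1 : ContinuousAt (fun t => ∫ s in t..a0, w s / s^(L+2)) x :=
      (ftc_left' ⟨ha0, ha0e⟩ (aintegrand_cont (L := L+1) hw) hxI).continuousAt
    exact (h1.mul continuousAt_const).mul (continuous_pow _).continuousAt

lemma asmooth (m : ℕ) : ∀ (L : ℕ), m ≤ L → ∀ (e a0 : ℝ), 0 < a0 → a0 < e → ∀ w : ℝ → ℝ,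
    ContDiffOn ℝ m w (Ico 0 e) → ContDiffOn ℝ m (Afun L a0 w) (Ico 0 e) := by
  induction m with
  | zero =>
    intro L _ e a0 ha0 ha0e w hw
    rw [show ((0:ℕ) : WithTop ℕ∞) = 0 from rfl, contDiffOn_zero] at *
    exact Afun_contOn ha0 ha0e hw
  | succ m IH =>
    intro L hmL e a0 ha0 ha0e w hw
    obtain ⟨K, rfl⟩ : ∃ K, L = K + 1 := ⟨L - 1, by omega⟩
    have hmK : m ≤ K := by omega
    have he : 0 < e := lt_trans ha0 ha0e
    have hu := uniqueDiffOn_Ico (0:ℝ) e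
    set w' : ℝ → ℝ := derivWithin w (Ico 0 e) with hw'def
    have hw' : ContDiffOn ℝ m w' (Ico 0 e) := hw.derivWithin hu (by exact_mod_cast le_refl _)
    have hwc : ContinuousOn w (Ico 0 e) := hw.continuousOn
    have hw'c : ContinuousOn w' (Ico 0 e) := hw'.continuousOn
    set G : ℝ → ℝ := Afun K a0 w' with hGdef
    have hG : ContDiffOn ℝ m G (Ico 0 e) := IH K hmK e a0 ha0 ha0e w' hw'
    have hGc : ContinuousOn G (Ico 0 e) := hG.continuousOn
    have hwd : ∀ x ∈ Ico (0:ℝ) e, HasDerivWithinAt w (w' x) (Ico 0 e) x := fun x hx =>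
      (hw.differentiableOn (by simp) x hx).hasDerivWithinAt
    have hwdi : ∀ x ∈ Ioo (0:ℝ) e, HasDerivAt w (w' x) x := fun x hx =>
      (hwd x ⟨hx.1.le, hx.2⟩).hasDerivAt (mem_nhds_of_Ioo hx)
    -- integration by parts
    have parts : ∀ x ∈ Ioo (0:ℝ) e, (∫ s in x..a0, w s / s^(K+3))
        = w x / ((K+2) * x^(K+2)) - w a0 / ((K+2) * a0^(K+2))
          + (1/(K+2)) * ∫ s in x..a0, w' s / s^(K+2) := by
      intro x hx
      have hsub : uIcc x a0 ⊆ Ioo 0 e := (ordConnected_Ioo).uIcc_subset hx ⟨ha0, ha0e⟩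
      have hFTC : (∫ s in x..a0, (w s / s^(K+3) - w' s / ((K+2) * s^(K+2))))
          = (- w a0 / ((K+2) * a0^(K+2))) - (- w x / ((K+2) * x^(K+2))) := by
        refine intervalIntegral.integral_eq_sub_of_hasDerivAt
          (f := fun s => - w s / ((K+2) * s^(K+2))) ?_ ?_
        · intro s hs
          have hsI : s ∈ Ioo (0:ℝ) e := hsub hs
          have hs0 : s ≠ 0 := ne_of_gt hsI.1
          have hds : HasDerivAt w (w' s) s := hwdi s hsI
          have hpow : HasDerivAt (fun s : ℝ => ((K+2 : ℝ) * s^(K+2))⁻¹)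
              (-((K+2:ℝ) * ((K+2) * s^(K+1))) / ((K+2) * s^(K+2))^2) s := by
            have hp : HasDerivAt (fun s : ℝ => (K+2 : ℝ) * s^(K+2))
                ((K+2:ℝ) * ((K+2) * s^(K+1))) s := by
              have := (hasDerivAt_pow (K+2) s).const_mul ((K:ℝ)+2)
              simpa [Nat.add_sub_cancel] using this
            exact hp.inv (by positivity)
          have hcomb := ((hds.neg).mul hpow)
          have harr : HasDerivAt (fun s => - w s / ((K+2) * s^(K+2)))
              (- w' s / ((K+2) * s^(K+2)) + (- w s) * (-((K+2:ℝ) * ((K+2) * s^(K+1))) / ((K+2) * s^(K+2))^2)) s := by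
            have : (fun s => - w s / ((K+2) * s^(K+2)))
                = fun s => (- w s) * ((K+2 : ℝ) * s^(K+2))⁻¹ := by
              ext s; rw [div_eq_mul_inv]
            rw [this]
            exact hcomb.congr_deriv (by simp only [Pi.neg_apply]; ring)
          refine harr.congr_deriv ?_
          have hx2 : ((K:ℝ)+2) * s^(K+2) ≠ 0 := by positivity
          field_simp
          ring
        · refine (ContinuousOn.intervalIntegrable ?_)
          refine ContinuousOn.sub ?_ ?_
          · exact ((hwc.mono (hsub.trans Ioo_subset_Ico_self)).div
              ((continuous_pow _).continuousOn)
              (fun s hs => pow_ne_zero _ (ne_of_gt (hsub hs).1)))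
          · exact ((hw'c.mono (hsub.trans Ioo_subset_Ico_self)).div
              (by fun_prop)
              (fun s hs => by
                have := (hsub hs).1; positivity))
      have hi1 : IntervalIntegrable (fun s => w s / s^(K+3)) volume x a0 :=
        ((hwc.mono (hsub.trans Ioo_subset_Ico_self)).div
          ((continuous_pow _).continuousOn)
          (fun s hs => pow_ne_zero _ (ne_of_gt (hsub hs).1))).intervalIntegrable
      have hi2 : IntervalIntegrable (fun s => w' s / ((K+2) * s^(K+2))) volume x a0 :=
        ((hw'c.mono (hsub.trans Ioo_subset_Ico_self)).div
          (by fun_prop)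
          (fun s hs => by have := (hsub hs).1; positivity)).intervalIntegrable
      rw [intervalIntegral.integral_sub hi1 hi2] at hFTC
      have hi3 : (∫ s in x..a0, w' s / ((K+2) * s^(K+2)))
          = (1/(K+2)) * ∫ s in x..a0, w' s / s^(K+2) := by
        rw [← intervalIntegral.integral_const_mul]
        congr 1; ext s
        field_simp
      rw [hi3] at hFTC
      have := sub_eq_iff_eq_add.mp hFTC
      rw [this]
      ring
    -- key identity
    have hAeq : ∀ x ∈ Ico (0:ℝ) e, Afun (K+1) a0 w x
        = w x - w a0 * (x/a0)^(K+2) + x * G x / (K+1) := by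
      intro x hx
      rcases eq_or_lt_of_le hx.1 with h0 | h0
      · rw [← h0, Afun_zero]
        simp [ne_of_gt ha0]
      · rw [Afun_pos h0, hGdef, Afun_pos h0, parts x ⟨h0, hx.2⟩]
        have hx0 : x ≠ 0 := ne_of_gt h0
        have ha00 : a0 ≠ 0 := ne_of_gt ha0
        have hK2 : ((K:ℝ)+2) ≠ 0 := by positivity
        push_cast
        rw [div_pow]
        field_simp
        ring
    -- derivative of W := x * G x / (K+1)
    have hWd : ∀ x ∈ Ico (0:ℝ) e, HasDerivWithinAt (fun t => t * G t / (K+1))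
        ((K+2) * G x / (K+1) - w' x) (Ico 0 e) x := by
      intro x hx
      rcases eq_or_lt_of_le hx.1 with h0 | h0
      · rw [← h0]
        rw [hasDerivWithinAt_iff_tendsto_slope]
        have hslope : ∀ t ∈ Ico (0:ℝ) e \ {(0:ℝ)},
            slope (fun t => t * G t / (K+1)) 0 t = G t / (K+1) := by
          intro t ht
          have ht0 : t ≠ 0 := ht.2
          rw [slope_def_field]
          field_simp
          ring
        have hlim : Tendsto (fun t => G t / (K+1)) (𝓝[Ico (0:ℝ) e \ {0}] 0)
            (𝓝 (G 0 / (K+1))) :=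
          ((hGc 0 ⟨le_refl _, he⟩).mono diff_subset).div_const _
        have hval : G 0 / ((K:ℝ)+1) = (K+2) * G 0 / (K+1) - w' 0 := by
          have hG0 : G 0 = w' 0 := Afun_zero K a0 w'
          rw [hG0]; field_simp; ring
        rw [hval] at hlim
        exact Tendsto.congr' (by
          filter_upwards [self_mem_nhdsWithin] with t ht
          exact (hslope t ht).symm) hlim
      · have hxI : x ∈ Ioo 0 e := ⟨h0, hx.2⟩
        have hx0 : x ≠ 0 := ne_of_gt h0
        have hI : HasDerivAt (fun t => ∫ s in t..a0, w' s / s^(K+2))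
            (-(w' x / x^(K+2))) x :=
          ftc_left' ⟨ha0, ha0e⟩ (aintegrand_cont (L := K+1) hw'c) hxI
        have hpow : HasDerivAt (fun t : ℝ => t^(K+2)) ((K+2) * x^(K+1)) x := by
          have := hasDerivAt_pow (K+2) x
          simpa [Nat.add_sub_cancel] using this
        have hprod := hI.mul hpow
        have heq : (fun t => t * G t / (K+1)) =ᶠ[𝓝 x]
            (fun t => (∫ s in t..a0, w' s / s^(K+2)) * t^(K+2)) := by
          filter_upwards [Ioi_mem_nhds h0] with t ht
          rw [hGdef, Afun_pos ht]
          have ht0 : (t:ℝ) ≠ 0 := ne_of_gt ht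
          field_simp
          ring
        have h2 := hprod.congr_of_eventuallyEq heq
        have h3 : (-(w' x / x^(K+2))) * x^(K+2)
              + (∫ s in x..a0, w' s / s^(K+2)) * ((K+2) * x^(K+1))
            = (K+2) * G x / (K+1) - w' x := by
          rw [hGdef, Afun_pos h0]
          field_simp
          ring
        rw [h3] at h2
        exact h2.hasDerivWithinAt
    have hφ : ContDiffOn ℝ m (fun x => (K+2) * G x / (K+1) - w' x) (Ico 0 e) :=
      ((contDiffOn_const.mul hG).div_const _).sub hw'
    have hW : ContDiffOn ℝ (m+1) (fun t => t * G t / (K+1)) (Ico 0 e) :=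
      contDiffOn_step hφ hWd
    have hsmooth2 : ContDiffOn ℝ (m+1) (fun x => w x - w a0 * (x/a0)^(K+2)) (Ico 0 e) := by
      refine hw.sub ?_
      refine ContDiffOn.mul contDiffOn_const ?_
      exact (ContDiffOn.div_const contDiffOn_id _).pow _
    have hA : ContDiffOn ℝ (m+1)
        (fun x => w x - w a0 * (x/a0)^(K+2) + x * G x / (K+1)) (Ico 0 e) :=
      hsmooth2.add hW
    exact hA.congr hAeq

end Stmt15Aux

namespace Stmt15Aux

lemma quotient_step {e : ℝ} (he : 0 < e) {n : ℕ} {f : ℝ → ℝ}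
    (hf : ContDiffOn ℝ (n+1) f (Ico 0 e)) (hf0 : f 0 = 0) :
    ∃ g : ℝ → ℝ, ContDiffOn ℝ n g (Ico 0 e) ∧ ∀ x ∈ Ioo (0:ℝ) e, g x = f x / x := by
  have hu := uniqueDiffOn_Ico (0:ℝ) e
  set f' : ℝ → ℝ := derivWithin f (Ico 0 e) with hf'def
  have hf' : ContDiffOn ℝ n f' (Ico 0 e) := hf.derivWithin hu (by exact_mod_cast le_refl _)
  refine ⟨Bfun 0 f', bsmooth n 0 e he f' hf', fun x hx => ?_⟩
  rw [Bfun_pos hx.1]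
  have hFTC : (∫ s in (0:ℝ)..x, f' s) = f x - f 0 := by
    refine intervalIntegral.integral_eq_sub_of_hasDeriv_right_of_le hx.1.le
      (hf.continuousOn.mono (Icc_sub_Ico hx.1.le hx.2)) ?_
      ((hf'.continuousOn.mono (Icc_sub_Ico hx.1.le hx.2)).intervalIntegrable_of_Icc hx.1.le)
    intro s hs
    have hsI : s ∈ Ioo (0:ℝ) e := ⟨hs.1, hs.2.trans hx.2⟩
    exact (((hf.differentiableOn (by simp) s
      ⟨hsI.1.le, hsI.2⟩).hasDerivWithinAt).hasDerivAt (mem_nhds_of_Ioo hsI)).hasDerivWithinAt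
  have : (∫ s in (0:ℝ)..x, s^0 * f' s) = ∫ s in (0:ℝ)..x, f' s := by
    congr 1; ext s; rw [pow_zero, one_mul]
  rw [this, hFTC, hf0, sub_zero, pow_one]
  push_cast
  ring

lemma quotient_iter {e : ℝ} (he : 0 < e) (N : ℕ) : ∀ (n : ℕ) (f : ℝ → ℝ),
    ContDiffOn ℝ (n+N : ℕ) f (Ico 0 e) →
    (∀ j, j < N → Tendsto (fun x => f x / x^j) (𝓝[Ioi 0] 0) (𝓝 0)) →
    ∃ g, ContDiffOn ℝ n g (Ico 0 e) ∧ ∀ x ∈ Ioo (0:ℝ) e, g x = f x / x^N := by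
  induction N with
  | zero =>
    intro n f hf _
    exact ⟨f, by simpa using hf, fun x hx => by simp⟩
  | succ N IH =>
    intro n f hf hv
    obtain ⟨g, hg, hgx⟩ := IH (n+1) f (by
      have : (n+1) + N = n + (N+1) := by omega
      rw [this]; exact hf) (fun j hj => hv j (by omega))
    have hg0 : g 0 = 0 := by
      have h1 : Tendsto g (𝓝[Ioo (0:ℝ) e] 0) (𝓝 (g 0)) := by
        have := (hg.continuousOn 0 ⟨le_refl _, he⟩)
        exact this.tendsto.mono_left (nhdsWithin_mono _ Ioo_subset_Ico_self)
      have h2 : Tendsto g (𝓝[Ioo (0:ℝ) e] 0) (𝓝 0) := by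
        have h3 : Tendsto (fun x => f x / x^N) (𝓝[Ioo (0:ℝ) e] 0) (𝓝 0) := by
          rw [nhdsWithin_Ioo_eq_nhdsGT he]
          exact hv N (by omega)
        exact h3.congr' (by
          filter_upwards [self_mem_nhdsWithin] with x hx
          exact (hgx x hx).symm)
      exact tendsto_nhds_unique' (by
        rw [nhdsWithin_Ioo_eq_nhdsGT he]
        exact (nhdsGT_neBot (0:ℝ))) h1 h2
    obtain ⟨g2, hg2, hg2x⟩ := quotient_step he hg hg0
    refine ⟨g2, hg2, fun x hx => ?_⟩
    rw [hg2x x hx, hgx x hx]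
    rw [div_div, ← pow_succ]

end Stmt15Aux

namespace Stmt15Aux

open Real

lemma main_field (ℓ r : ℕ) (hℓ : 1 ≤ ℓ) (hr1 : 1 ≤ r) (hrℓ : r ≤ ℓ) (ε : ℝ) (hε : 0 < ε)
    (X : ℝ → ℝ) (α : ℝ) (hα : 0 < α)
    (hX : ContDiffOn ℝ (ℓ + r : ℕ) X (Set.Ico 0 ε))
    (hXa : Asymptotics.IsLittleO (nhdsWithin 0 (Set.Ioi 0))
      (fun x : ℝ => X x - α * x ^ (ℓ + 1)) (fun x : ℝ => x ^ (ℓ + 1))) :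
    ∃ (a : ℝ) (u du : ℝ → ℝ), 0 < a ∧ a < ε ∧
      ContDiffOn ℝ (r : ℕ) u (Ico 0 a) ∧
      u 0 = 0 ∧
      StrictMonoOn u (Ico 0 a) ∧
      ContDiffOn ℝ (r - 1 : ℕ) du (Ico 0 a) ∧
      (∀ x ∈ Ico (0:ℝ) a, HasDerivWithinAt u (du x) (Ico 0 a) x) ∧
      (∀ x ∈ Ico (0:ℝ) a, 0 < du x) ∧
      (∀ x ∈ Ico (0:ℝ) a, du x * X x = (u x)^(ℓ+1)) := by
  obtain ⟨L, rfl⟩ : ∃ L, ℓ = L + 1 := ⟨ℓ - 1, by omega⟩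
  obtain ⟨m, rfl⟩ : ∃ m, r = m + 1 := ⟨r - 1, by omega⟩
  have hmL : m ≤ L := by omega
  -- extract a small interval where X is comparable to α x^(ℓ+1)
  have hev : ∀ᶠ x in 𝓝[>] (0:ℝ), |X x - α * x^(L+2)| ≤ (α/2) * |x^(L+2)| := by
    have := hXa.def (by positivity : (0:ℝ) < α/2)
    filter_upwards [this] with x hx
    simpa [Real.norm_eq_abs] using hx
  rw [eventually_nhdsWithin_iff, Metric.eventually_nhds_iff] at hev
  obtain ⟨δ₀, hδ₀, hδ₀2⟩ := hev
  set e1 := min δ₀ ε with he1def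
  have he1 : 0 < e1 := lt_min hδ₀ hε
  have he1ε : e1 ≤ ε := min_le_right _ _
  have hXb : ∀ x ∈ Ioo (0:ℝ) e1, (α/2) * x^(L+2) ≤ X x ∧ X x ≤ (α + α/2) * x^(L+2) := by
    intro x hx
    have h1 : dist x 0 < δ₀ := by
      rw [Real.dist_eq, sub_zero, abs_of_pos hx.1]
      exact lt_of_lt_of_le hx.2 (min_le_left _ _)
    have h2 := hδ₀2 h1 hx.1
    rw [abs_of_pos (pow_pos hx.1 _)] at h2
    rw [abs_le] at h2
    constructor <;> nlinarith [h2.1, h2.2]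
  have hXpos : ∀ x ∈ Ioo (0:ℝ) e1, 0 < X x := fun x hx =>
    lt_of_lt_of_le (by have := pow_pos hx.1 (L+2); positivity) (hXb x hx).1
  -- limit of X x / x^(L+2)
  have hXquot : Tendsto (fun x => X x / x^(L+2)) (𝓝[>] (0:ℝ)) (𝓝 α) := by
    have h1 : Tendsto (fun x => (X x - α * x^(L+2)) / x^(L+2)) (𝓝[>] (0:ℝ)) (𝓝 0) :=
      hXa.tendsto_div_nhds_zero
    have h2 : Tendsto (fun x => (X x - α * x^(L+2)) / x^(L+2) + α) (𝓝[>] (0:ℝ)) (𝓝 (0 + α)) :=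
      h1.add tendsto_const_nhds
    rw [zero_add] at h2
    refine h2.congr' ?_
    filter_upwards [self_mem_nhdsWithin] with x hx
    have hx0 : x ≠ 0 := ne_of_gt hx
    field_simp
    ring
  -- X 0 = 0
  have hX0 : X 0 = 0 := by
    have h1 : Tendsto X (𝓝[Ioo (0:ℝ) e1] 0) (𝓝 (X 0)) :=
      ((hX.continuousOn 0 ⟨le_refl _, hε⟩).tendsto).mono_left
        (nhdsWithin_mono _ (fun x hx => ⟨hx.1.le, lt_of_lt_of_le hx.2 he1ε⟩))
    have h2 : Tendsto X (𝓝[Ioo (0:ℝ) e1] 0) (𝓝 0) := by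
      have hgen : ∀ C : ℝ, Tendsto (fun x : ℝ => C * x^(L+2)) (𝓝[Ioo (0:ℝ) e1] 0) (𝓝 0) := by
        intro C
        have hc : Continuous (fun x : ℝ => C * x^(L+2)) := continuous_const.mul (continuous_pow _)
        have h00 : C * (0:ℝ)^(L+2) = 0 := by
          rw [zero_pow (show L+2 ≠ 0 by omega), mul_zero]
        have := hc.tendsto 0
        simp only [h00] at this
        exact this.mono_left nhdsWithin_le_nhds
      have hup := hgen (α + α/2)
      have hlo := hgen (α/2)
      refine tendsto_of_tendsto_of_tendsto_of_le_of_le' hlo hup ?_ ?_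
      · filter_upwards [self_mem_nhdsWithin] with x hx
        exact (hXb x hx).1
      · filter_upwards [self_mem_nhdsWithin] with x hx
        exact (hXb x hx).2
    exact tendsto_nhds_unique' (by
      rw [nhdsWithin_Ioo_eq_nhdsGT he1]
      exact (nhdsGT_neBot (0:ℝ))) h1 h2
  -- the quotient g = X / x^(L+2)
  have hXe1 : ContDiffOn ℝ ((m + (L+2) : ℕ)) X (Ico 0 e1) := by
    refine (hX.mono (fun x hx => ⟨hx.1, lt_of_lt_of_le hx.2 he1ε⟩)).of_le ?_
    norm_cast
    omega
  obtain ⟨g, hg, hgx⟩ := quotient_iter he1 (L+2) m X hXe1 (by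
    intro j hj
    have hpowlim : Tendsto (fun x : ℝ => x^(L+2-j)) (𝓝[>] (0:ℝ)) (𝓝 0) := by
      have h0 : Tendsto (fun x : ℝ => x^(L+2-j)) (𝓝 0) (𝓝 ((0:ℝ)^(L+2-j))) :=
        (continuous_pow (L+2-j)).tendsto' 0 _ rfl
      rw [zero_pow (by omega : L+2-j ≠ 0)] at h0
      exact h0.mono_left nhdsWithin_le_nhds
    have := hXquot.mul hpowlim
    rw [mul_zero] at this
    refine this.congr' ?_
    filter_upwards [self_mem_nhdsWithin] with x hx
    have hx0 : (x:ℝ) ≠ 0 := ne_of_gt hx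
    rw [div_mul_eq_mul_div, div_eq_div_iff (by positivity) (by positivity)]
    rw [mul_assoc, ← pow_add, show L+2-j+j = L+2 by omega])
  -- g 0 = α, g positive
  have hgc : ContinuousOn g (Ico 0 e1) := hg.continuousOn
  have hg0 : g 0 = α := by
    have h1 : Tendsto g (𝓝[Ioo (0:ℝ) e1] 0) (𝓝 (g 0)) :=
      (hgc 0 ⟨le_refl _, he1⟩).tendsto.mono_left (nhdsWithin_mono _ Ioo_subset_Ico_self)
    have h2 : Tendsto g (𝓝[Ioo (0:ℝ) e1] 0) (𝓝 α) := by
      refine Tendsto.congr' ?_ (hXquot.mono_left (by rw [nhdsWithin_Ioo_eq_nhdsGT he1]))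
      filter_upwards [self_mem_nhdsWithin] with x hx
      exact (hgx x hx).symm
    exact tendsto_nhds_unique' (by
      rw [nhdsWithin_Ioo_eq_nhdsGT he1]
      exact (nhdsGT_neBot (0:ℝ))) h1 h2
  have hgpos : ∀ x ∈ Ico (0:ℝ) e1, 0 < g x := by
    intro x hx
    rcases eq_or_lt_of_le hx.1 with h0|h0
    · rw [← h0, hg0]; exact hα
    · rw [hgx x ⟨h0, hx.2⟩]
      exact div_pos (hXpos x ⟨h0, hx.2⟩) (pow_pos h0 _)
  -- q := g⁻¹
  set q : ℝ → ℝ := fun x => (g x)⁻¹ with hqdef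
  have hq : ContDiffOn ℝ m q (Ico 0 e1) := hg.inv (fun x hx => ne_of_gt (hgpos x hx))
  have hqc : ContinuousOn q (Ico 0 e1) := hq.continuousOn
  have hqpos : ∀ x ∈ Ico (0:ℝ) e1, 0 < q x := fun x hx => inv_pos.mpr (hgpos x hx)
  have hq0 : q 0 = α⁻¹ := by rw [hqdef]; simp [hg0]
  have hqX : ∀ x ∈ Ico (0:ℝ) e1, q x * X x = x^(L+2) := by
    intro x hx
    rcases eq_or_lt_of_le hx.1 with h0|h0
    · rw [← h0, hX0, mul_zero, zero_pow (by omega : L+2 ≠ 0)]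
    · rw [hqdef]
      simp only
      rw [hgx x ⟨h0, hx.2⟩]
      have hX0' : X x ≠ 0 := ne_of_gt (hXpos x ⟨h0, hx.2⟩)
      have hxp : (x:ℝ)^(L+2) ≠ 0 := by positivity
      field_simp
  -- the singular integral A
  set a0 : ℝ := e1/2 with ha0def
  have ha0 : 0 < a0 := by positivity
  have ha0e : a0 < e1 := by rw [ha0def]; linarith
  set A : ℝ → ℝ := Afun L a0 q with hAdef
  have hA : ContDiffOn ℝ m A (Ico 0 e1) := asmooth m L hmL e1 a0 ha0 ha0e q hq
  have hAc : ContinuousOn A (Ico 0 e1) := hA.continuousOn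
  have hA0 : A 0 = α⁻¹ := by rw [hAdef, Afun_zero, hq0]
  -- positivity of A on Ico 0 a0
  have hApos : ∀ x ∈ Ico (0:ℝ) a0, 0 < A x := by
    intro x hx
    rcases eq_or_lt_of_le hx.1 with h0|h0
    · rw [← h0, hA0]; positivity
    · rw [hAdef, Afun_pos h0]
      have hIpos : 0 < ∫ s in x..a0, q s / s^(L+2) := by
        refine intervalIntegral.intervalIntegral_pos_of_pos_on
          (aintegrable (L := L+1) h0 (le_of_lt hx.2) ha0e hqc) ?_ hx.2
        intro s hs
        have hs1 : s ∈ Ico (0:ℝ) e1 := ⟨(h0.trans hs.1).le, hs.2.trans ha0e⟩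
        exact div_pos (hqpos s hs1) (pow_pos (h0.trans hs.1) _)
      have : (0:ℝ) < x^(L+1) := pow_pos h0 _
      positivity
  -- derivative of A at interior points
  have hAd : ∀ x ∈ Ioo (0:ℝ) a0, HasDerivAt A (((L+1)/x) * (A x - q x)) x := by
    intro x hx
    have hxI : x ∈ Ioo (0:ℝ) e1 := ⟨hx.1, hx.2.trans ha0e⟩
    have hx0 : x ≠ 0 := ne_of_gt hx.1
    have hI : HasDerivAt (fun t => ∫ s in t..a0, q s / s^(L+2)) (-(q x / x^(L+2))) x :=
      ftc_left' ⟨ha0, ha0e⟩ (aintegrand_cont (L := L+1) hqc) hxI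
    have hpow : HasDerivAt (fun t : ℝ => (L+1 : ℝ) * t^(L+1)) ((L+1) * ((L+1) * x^L)) x := by
      have := (hasDerivAt_pow (L+1) x).const_mul ((L:ℝ)+1)
      simpa [Nat.add_sub_cancel] using this
    have hprod := hI.mul hpow
    have heq : A =ᶠ[𝓝 x] (fun t => (∫ s in t..a0, q s / s^(L+2)) * ((L+1 : ℝ) * t^(L+1))) := by
      filter_upwards [Ioi_mem_nhds hx.1] with t ht
      rw [hAdef, Afun_pos ht]
      ring
    have h2 := hprod.congr_of_eventuallyEq heq
    have h3 : (-(q x / x^(L+2))) * ((L+1:ℝ) * x^(L+1))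
        + (∫ s in x..a0, q s / s^(L+2)) * ((L+1) * ((L+1) * x^L))
        = ((L+1)/x) * (A x - q x) := by
      rw [hAdef, Afun_pos hx.1]
      field_simp
      ring
    rw [h3] at h2
    exact h2
  -- definition of u and du
  set c : ℝ := -(1/((L:ℝ)+1)) with hcdef
  set u : ℝ → ℝ := fun x => x * (A x) ^ c with hudef
  set du : ℝ → ℝ := fun x => q x * (A x) ^ (c - 1) with hdudef
  have hu0 : u 0 = 0 := by rw [hudef]; simp
  have hAne : ∀ x ∈ Ico (0:ℝ) a0, A x ≠ 0 := fun x hx => ne_of_gt (hApos x hx)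
  have hsub0 : Ico (0:ℝ) a0 ⊆ Ico (0:ℝ) e1 := fun x hx => ⟨hx.1, hx.2.trans ha0e⟩
  have hdusm : ContDiffOn ℝ m du (Ico 0 a0) := by
    rw [hdudef]
    exact (hq.mono hsub0).mul (ContDiffOn.rpow_const_of_ne (hA.mono hsub0) hAne)
  have hdupos : ∀ x ∈ Ico (0:ℝ) a0, 0 < du x := by
    intro x hx
    rw [hdudef]
    exact mul_pos (hqpos x (hsub0 hx)) (Real.rpow_pos_of_pos (hApos x hx) _)
  -- derivative of u
  have hud : ∀ x ∈ Ico (0:ℝ) a0, HasDerivWithinAt u (du x) (Ico 0 a0) x := by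
    intro x hx
    rcases eq_or_lt_of_le hx.1 with h0|h0
    · rw [← h0]
      rw [hasDerivWithinAt_iff_tendsto_slope]
      have hslope : ∀ t ∈ Ico (0:ℝ) a0 \ {(0:ℝ)}, slope u 0 t = (A t) ^ c := by
        intro t ht
        have ht0 : t ≠ 0 := ht.2
        have hut : u t = t * (A t) ^ c := rfl
        rw [slope_def_field, hu0, hut, sub_zero, sub_zero]
        exact mul_div_cancel_left₀ _ ht0
      have hlim : Tendsto (fun t => (A t) ^ c) (𝓝[Ico (0:ℝ) a0 \ {0}] 0) (𝓝 ((A 0) ^ c)) := by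
        have h1 : ContinuousWithinAt A (Ico 0 a0) 0 :=
          (hAc.mono hsub0) 0 ⟨le_refl _, ha0⟩
        have h2 : ContinuousAt (fun y : ℝ => y ^ c) (A 0) :=
          Real.continuousAt_rpow_const _ _ (Or.inl (by rw [hA0]; positivity))
        exact (h2.comp_continuousWithinAt h1).tendsto.mono_left
          (nhdsWithin_mono _ diff_subset)
      have hval : (A 0) ^ c = du 0 := by
        rw [hdudef]
        simp only [hq0, hA0]
        rw [show c = (c - 1) + 1 by ring, Real.rpow_add (by positivity : (0:ℝ) < α⁻¹),
          Real.rpow_one]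
        ring
      rw [← hval]
      exact Tendsto.congr' (by
        filter_upwards [self_mem_nhdsWithin] with t ht
        exact (hslope t ht).symm) hlim
    · have hxI : x ∈ Ioo (0:ℝ) a0 := ⟨h0, hx.2⟩
      have hx0 : x ≠ 0 := ne_of_gt h0
      have hrpow := (hAd x hxI).rpow_const (p := c) (Or.inl (hAne x hx))
      have hu' := (hasDerivAt_id x).mul hrpow
      have hAx : (0:ℝ) < A x := hApos x hx
      have hcL : c * ((L:ℝ)+1) = -1 := by
        rw [hcdef]; field_simp
      have hAc1 : (A x) ^ (c-1) * A x = (A x) ^ c := by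
        rw [Real.rpow_sub_one (ne_of_gt hAx)]
        field_simp
      have harith : 1 * A x ^ c + id x * ((↑L + 1) / x * (A x - q x) * c * A x ^ (c - 1))
          = du x := by
        show 1 * A x ^ c + x * ((↑L + 1) / x * (A x - q x) * c * A x ^ (c - 1))
          = q x * A x ^ (c-1)
        calc 1 * A x ^ c + x * ((↑L + 1) / x * (A x - q x) * c * A x ^ (c - 1))
            = A x ^ (c-1) * A x + (c * ((L:ℝ)+1)) * ((A x - q x) * A x ^ (c-1)) := by
              rw [hAc1]; field_simp
          _ = q x * A x ^ (c-1) := by rw [hcL]; ring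
      rw [harith] at hu'
      exact (hu'.hasDerivWithinAt).mono (fun t ht => trivial)
  -- smoothness of u
  have husm : ContDiffOn ℝ (m+1) u (Ico 0 a0) := contDiffOn_step hdusm hud
  -- strict monotonicity
  have humono : StrictMonoOn u (Ico 0 a0) := by
    refine strictMonoOn_of_deriv_pos (convex_Ico 0 a0) husm.continuousOn ?_
    intro x hx
    rw [interior_Ico] at hx
    have hda : HasDerivAt u (du x) x :=
      (hud x ⟨hx.1.le, hx.2⟩).hasDerivAt (mem_nhds_of_Ioo hx)
    rw [hda.deriv]
    exact hdupos x ⟨hx.1.le, hx.2⟩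
  -- conjugacy identity
  have hconj : ∀ x ∈ Ico (0:ℝ) a0, du x * X x = (u x)^(L+2) := by
    intro x hx
    rcases eq_or_lt_of_le hx.1 with h0|h0
    · rw [← h0, hX0, mul_zero, hu0, zero_pow (by omega : L+2 ≠ 0)]
    · have hAx : (0:ℝ) < A x := hApos x hx
      have hux : u x = x * A x ^ c := rfl
      have hdux : du x = q x * A x ^ (c-1) := rfl
      have e2' : (A x ^ c)^(L+2) = A x ^ (c - 1) := by
        rw [← Real.rpow_natCast (A x ^ c) (L+2), ← Real.rpow_mul hAx.le]
        congr 1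
        push_cast
        rw [hcdef]
        field_simp
        ring
      calc du x * X x = (q x * X x) * A x ^ (c-1) := by rw [hdux]; ring
        _ = x^(L+2) * A x ^ (c-1) := by rw [hqX x (hsub0 hx)]
        _ = x^(L+2) * (A x ^ c)^(L+2) := by rw [e2']
        _ = (u x)^(L+2) := by rw [hux, mul_pow]
  exact ⟨a0, u, du, ha0, lt_of_lt_of_le ha0e he1ε, husm, hu0, humono,
    by simpa using hdusm, hud, hdupos, hconj⟩

end Stmt15Aux


/-- Existence of `C^r` conjugacy between exactly `ℓ`-flat expanding vector fields of class
`C^{ℓ+r}`, for `1 ≤ r ≤ ℓ`. -/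
theorem stmt_15 (ℓ r : ℕ) (hℓ : 1 ≤ ℓ) (hr1 : 1 ≤ r) (hrℓ : r ≤ ℓ)
    (εX εY : ℝ) (hεX : 0 < εX) (hεY : 0 < εY) (X Y : ℝ → ℝ) (α β : ℝ)
    (hα : 0 < α) (hβ : 0 < β)
    (hX : ContDiffOn ℝ (ℓ + r : ℕ) X (Set.Ico 0 εX))
    (hY : ContDiffOn ℝ (ℓ + r : ℕ) Y (Set.Ico 0 εY))
    (hXa : Asymptotics.IsLittleO (nhdsWithin 0 (Set.Ioi 0))
      (fun x : ℝ => X x - α * x ^ (ℓ + 1)) (fun x : ℝ => x ^ (ℓ + 1)))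
    (hYa : Asymptotics.IsLittleO (nhdsWithin 0 (Set.Ioi 0))
      (fun x : ℝ => Y x - β * x ^ (ℓ + 1)) (fun x : ℝ => x ^ (ℓ + 1))) :
    ∃ (δ : ℝ), 0 < δ ∧ ∃ h : ℝ → ℝ,
      ContDiffOn ℝ (r : ℕ) h (Set.Ico 0 δ) ∧ h 0 = 0 ∧
      0 < derivWithin h (Set.Ico 0 δ) 0 ∧
      ∀ x ∈ Set.Ico (0 : ℝ) δ, derivWithin h (Set.Ico 0 δ) x * X x = Y (h x) := by
  classical
  open Stmt15Aux in
  obtain ⟨aX, u, duX, haX, haXε, husm, hu0, humono, hduXsm, hud, hduXpos, hconjX⟩ :=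
    Stmt15Aux.main_field ℓ r hℓ hr1 hrℓ εX hεX X α hα hX hXa
  obtain ⟨aY, v, duY, haY, haYε, hvsm, hv0, hvmono, hduYsm, hvd, hduYpos, hconjY⟩ :=
    Stmt15Aux.main_field ℓ r hℓ hr1 hrℓ εY hεY Y β hβ hY hYa
  obtain ⟨m, rfl⟩ : ∃ m, r = m + 1 := ⟨r - 1, by omega⟩
  have hmm : ((m + 1 : ℕ) - 1 : ℕ) = m := rfl
  rw [hmm] at hduXsm hduYsm
  -- setup for the inverse of v
  set b : ℝ := aY / 2 with hbdef
  have hb : 0 < b := by positivity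
  have hbaY : b < aY := by rw [hbdef]; linarith
  have hsubY : Icc (0:ℝ) b ⊆ Ico 0 aY := fun z hz => ⟨hz.1, lt_of_le_of_lt hz.2 hbaY⟩
  set cc : ℝ := v b with hccdef
  have hcc : 0 < cc := by
    rw [hccdef, ← hv0]
    exact hvmono ⟨le_refl _, haY⟩ ⟨hb.le, hbaY⟩ hb
  have hvmon : MonotoneOn v (Ico 0 aY) := hvmono.monotoneOn
  have hIVT : ∀ y ∈ Icc (0:ℝ) cc, ∃ z, z ∈ Icc (0:ℝ) b ∧ v z = y := by
    intro y hy
    have h1 := intermediate_value_Icc hb.le (hvsm.continuousOn.mono hsubY)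
    have hy' : y ∈ Icc (v 0) (v b) := by rw [hv0]; exact hy
    obtain ⟨z, hz, hvz⟩ := h1 hy'
    exact ⟨z, hz, hvz⟩
  set ψ : ℝ → ℝ := fun y =>
    if hy : ∃ z, z ∈ Icc (0:ℝ) b ∧ v z = y then hy.choose else 0 with hψdef
  have hψspec : ∀ y ∈ Icc (0:ℝ) cc, ψ y ∈ Icc (0:ℝ) b ∧ v (ψ y) = y := by
    intro y hy
    have hex := hIVT y hy
    rw [hψdef]
    simp only [dif_pos hex]
    exact ⟨hex.choose_spec.1, hex.choose_spec.2⟩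
  have hvinj : InjOn v (Ico 0 aY) := hvmono.injOn
  have hψv : ∀ z ∈ Icc (0:ℝ) b, ψ (v z) = z := by
    intro z hz
    have hvz : v z ∈ Icc (0:ℝ) cc := by
      constructor
      · rw [← hv0]; exact hvmon ⟨le_refl _, haY⟩ (hsubY hz) hz.1
      · rw [hccdef]; exact hvmon (hsubY hz) ⟨hb.le, hbaY⟩ hz.2
    obtain ⟨hmem, heq⟩ := hψspec (v z) hvz
    exact hvinj (hsubY hmem) (hsubY hz) heq
  -- choice of δ
  have hucont0 : ContinuousWithinAt u (Ico 0 aX) 0 := husm.continuousOn 0 ⟨le_refl _, haX⟩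
  have hev : ∀ᶠ x in 𝓝[Ico (0:ℝ) aX] 0, u x < cc := by
    have : Iio cc ∈ 𝓝 (u 0) := by rw [hu0]; exact Iio_mem_nhds hcc
    exact hucont0 this
  rw [eventually_nhdsWithin_iff, Metric.eventually_nhds_iff] at hev
  obtain ⟨δ₁, hδ₁, hδ₁2⟩ := hev
  set δ : ℝ := min δ₁ aX with hδdef
  have hδ : 0 < δ := lt_min hδ₁ haX
  have hδaX : δ ≤ aX := min_le_right _ _
  have hsubX : Ico (0:ℝ) δ ⊆ Ico 0 aX := fun x hx => ⟨hx.1, lt_of_lt_of_le hx.2 hδaX⟩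
  have hucc : ∀ x ∈ Ico (0:ℝ) δ, u x < cc := by
    intro x hx
    refine hδ₁2 ?_ (hsubX hx)
    rw [Real.dist_eq, sub_zero, abs_of_nonneg hx.1]
    exact lt_of_lt_of_le hx.2 (min_le_left _ _)
  have hunneg : ∀ x ∈ Ico (0:ℝ) δ, 0 ≤ u x := by
    intro x hx
    rcases eq_or_lt_of_le hx.1 with h0|h0
    · rw [← h0, hu0]
    · rw [← hu0]
      exact (humono ⟨le_refl _, haX⟩ (hsubX hx) h0).le
  have hupos : ∀ x ∈ Ioo (0:ℝ) δ, 0 < u x := by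
    intro x hx
    rw [← hu0]
    exact humono ⟨le_refl _, haX⟩ (hsubX ⟨hx.1.le, hx.2⟩) hx.1
  set h : ℝ → ℝ := fun x => ψ (u x) with hhdef
  have hvh : ∀ x ∈ Ico (0:ℝ) δ, h x ∈ Icc (0:ℝ) b ∧ v (h x) = u x := by
    intro x hx
    exact hψspec (u x) ⟨hunneg x hx, (hucc x hx).le⟩
  have hh0 : h 0 = 0 := by
    have h1 := hψv 0 ⟨le_refl _, hb.le⟩
    rw [hv0] at h1
    show ψ (u 0) = 0
    rw [hu0]
    exact h1
  have hhpos : ∀ x ∈ Ioo (0:ℝ) δ, 0 < h x := by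
    intro x hx
    obtain ⟨hmem, heq⟩ := hvh x ⟨hx.1.le, hx.2⟩
    rcases eq_or_lt_of_le hmem.1 with h0|h0
    · exfalso
      have h2 : v (h x) = 0 := by rw [← h0]; exact hv0
      rw [heq] at h2
      exact absurd h2 (ne_of_gt (hupos x hx))
    · exact h0
  have hhmemY : ∀ x ∈ Ico (0:ℝ) δ, h x ∈ Ico (0:ℝ) aY := fun x hx =>
    ⟨(hvh x hx).1.1, lt_of_le_of_lt (hvh x hx).1.2 hbaY⟩
  -- continuity of ψ at interior points
  have hψcont : ∀ y0 ∈ Ioo (0:ℝ) cc, ContinuousAt ψ y0 := by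
    intro y0 hy0
    obtain ⟨hz0mem, hz0v⟩ := hψspec y0 ⟨hy0.1.le, hy0.2.le⟩
    set z0 : ℝ := ψ y0 with hz0def
    have hz0pos : 0 < z0 := by
      rcases eq_or_lt_of_le hz0mem.1 with h0|h0
      · exfalso
        have : v z0 = 0 := by rw [← h0]; exact hv0
        rw [hz0v] at this
        exact absurd this (ne_of_gt hy0.1)
      · exact h0
    have hz0b : z0 < b := by
      rcases eq_or_lt_of_le hz0mem.2 with h0|h0
      · exfalso
        have : v z0 = cc := by rw [h0]
        rw [hz0v] at this
        exact absurd this (ne_of_lt hy0.2)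
      · exact h0
    rw [Metric.continuousAt_iff]
    intro ε hε
    set ε' : ℝ := min (ε/2) (min (z0/2) ((b - z0)/2)) with hε'def
    have hε' : 0 < ε' := by
      refine lt_min (by linarith) (lt_min (by linarith) (by linarith))
    set z1 : ℝ := z0 - ε' with hz1def
    set z2 : ℝ := z0 + ε' with hz2def
    have hz1mem : z1 ∈ Icc (0:ℝ) b := by
      constructor
      · have : ε' ≤ z0/2 := le_trans (min_le_right _ _) (min_le_left _ _)
        rw [hz1def]; linarith
      · rw [hz1def]; linarith [hz0b, hε']
    have hz2mem : z2 ∈ Icc (0:ℝ) b := by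
      constructor
      · rw [hz2def]; linarith
      · have : ε' ≤ (b - z0)/2 := le_trans (min_le_right _ _) (min_le_right _ _)
        rw [hz2def]; linarith
    have hvz1 : v z1 < y0 := by
      rw [← hz0v]
      exact hvmono (hsubY hz1mem) (hsubY hz0mem) (by rw [hz1def]; linarith)
    have hvz2 : y0 < v z2 := by
      rw [← hz0v]
      exact hvmono (hsubY hz0mem) (hsubY hz2mem) (by rw [hz2def]; linarith)
    refine ⟨min (y0 - v z1) (v z2 - y0), lt_min (by linarith) (by linarith), fun {y} hy => ?_⟩
    rw [Real.dist_eq, abs_lt] at hy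
    have hy1 : v z1 < y := by
      have := hy.1
      have h2 : -(y0 - v z1) ≤ -(min (y0 - v z1) (v z2 - y0)) := by
        simp only [neg_le_neg_iff]
        exact min_le_left _ _
      linarith
    have hy2 : y < v z2 := by
      have := hy.2
      have h2 : min (y0 - v z1) (v z2 - y0) ≤ v z2 - y0 := min_le_right _ _
      linarith
    have hymem : y ∈ Icc (0:ℝ) cc := by
      constructor
      · have : (0:ℝ) ≤ v z1 := by rw [← hv0]; exact hvmon ⟨le_refl _, haY⟩ (hsubY hz1mem) hz1mem.1
        linarith
      · have : v z2 ≤ cc := hvmon (hsubY hz2mem) ⟨hb.le, hbaY⟩ hz2mem.2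
        linarith
    obtain ⟨hψymem, hψyv⟩ := hψspec y hymem
    have hlow : z1 < ψ y := by
      by_contra hcon
      push_neg at hcon
      have := hvmon (hsubY hψymem) (hsubY hz1mem) hcon
      rw [hψyv] at this
      linarith
    have hhigh : ψ y < z2 := by
      by_contra hcon
      push_neg at hcon
      have := hvmon (hsubY hz2mem) (hsubY hψymem) hcon
      rw [hψyv] at this
      linarith
    rw [Real.dist_eq, abs_lt]
    constructor
    · rw [hz1def] at hlow
      have : ε' ≤ ε/2 := min_le_left _ _
      linarith
    · rw [hz2def] at hhigh
      have : ε' ≤ ε/2 := min_le_left _ _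
      linarith
  -- h tends to 0 at 0 within
  have hht0 : Tendsto h (𝓝[Ico (0:ℝ) δ] 0) (𝓝 0) := by
    rw [Metric.tendsto_nhdsWithin_nhds]
    intro ε hε
    set z2 : ℝ := min (ε/2) b with hz2def
    have hz2 : 0 < z2 := lt_min (by linarith) hb
    have hz2b : z2 ≤ b := min_le_right _ _
    have hvz2 : 0 < v z2 := by
      rw [← hv0]
      exact hvmono ⟨le_refl _, haY⟩ (hsubY ⟨hz2.le, hz2b⟩) hz2
    have hev2 : ∀ᶠ x in 𝓝[Ico (0:ℝ) aX] 0, u x < v z2 := by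
      have : Iio (v z2) ∈ 𝓝 (u 0) := by rw [hu0]; exact Iio_mem_nhds hvz2
      exact hucont0 this
    rw [eventually_nhdsWithin_iff, Metric.eventually_nhds_iff] at hev2
    obtain ⟨δ₂, hδ₂, hδ₂2⟩ := hev2
    refine ⟨δ₂, hδ₂, fun {t} ht hdist => ?_⟩
    have htu : u t < v z2 := hδ₂2 hdist (hsubX ht)
    have hhtb : h t < z2 := by
      by_contra hcon
      push_neg at hcon
      have := hvmon (hsubY ⟨hz2.le, hz2b⟩) (hhmemY t ht) hcon
      rw [(hvh t ht).2] at this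
      linarith
    rw [Real.dist_eq, sub_zero, abs_of_nonneg (hvh t ht).1.1]
    have : z2 ≤ ε/2 := min_le_left _ _
    linarith
  have hhcont0 : ContinuousWithinAt h (Ico 0 δ) 0 := by
    rw [ContinuousWithinAt, hh0]
    exact hht0
  -- derivative of h
  have hhd : ∀ x ∈ Ico (0:ℝ) δ, HasDerivWithinAt h (duX x / duY (h x)) (Ico 0 δ) x := by
    intro x hx
    rcases eq_or_lt_of_le hx.1 with h0|h0
    · rw [← h0]
      rw [hasDerivWithinAt_iff_tendsto_slope]
      rw [Ico_diff_left]
      -- limit of u t / t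
      have hlimu : Tendsto (fun t => u t / t) (𝓝[Ioo (0:ℝ) δ] 0) (𝓝 (duX 0)) := by
        have h1 := (hasDerivWithinAt_iff_tendsto_slope).1 (hud 0 ⟨le_refl _, haX⟩)
        have h2 : 𝓝[Ioo (0:ℝ) δ] (0:ℝ) ≤ 𝓝[Ico (0:ℝ) aX \ {0}] 0 := by
          apply nhdsWithin_mono
          intro t ht
          exact ⟨hsubX ⟨ht.1.le, ht.2⟩, ne_of_gt ht.1⟩
        refine (h1.mono_left h2).congr' ?_
        filter_upwards [self_mem_nhdsWithin] with t ht
        rw [slope_def_field, hu0, sub_zero, sub_zero]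
      -- limit of z / v z
      have hlimv : Tendsto (fun z => z / v z) (𝓝[Ioo (0:ℝ) aY] 0) (𝓝 (duY 0)⁻¹) := by
        have h1 := (hasDerivWithinAt_iff_tendsto_slope).1 (hvd 0 ⟨le_refl _, haY⟩)
        have h2 : 𝓝[Ioo (0:ℝ) aY] (0:ℝ) ≤ 𝓝[Ico (0:ℝ) aY \ {0}] 0 := by
          apply nhdsWithin_mono
          intro t ht
          exact ⟨⟨ht.1.le, ht.2⟩, ne_of_gt ht.1⟩
        have h3 : Tendsto (fun z => v z / z) (𝓝[Ioo (0:ℝ) aY] 0) (𝓝 (duY 0)) := by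
          refine (h1.mono_left h2).congr' ?_
          filter_upwards [self_mem_nhdsWithin] with t ht
          rw [slope_def_field, hv0, sub_zero, sub_zero]
        have h4 := h3.inv₀ (ne_of_gt (hduYpos 0 ⟨le_refl _, haY⟩))
        refine h4.congr' ?_
        filter_upwards [self_mem_nhdsWithin] with t ht
        have ht0 : t ≠ 0 := ne_of_gt ht.1
        have hvt0 : v t ≠ 0 := by
          rw [← hv0]
          exact ne_of_gt (hvmono ⟨le_refl _, haY⟩ ⟨ht.1.le, ht.2⟩ ht.1)
        rw [← one_div, one_div_div]
      -- composition
      have hhmap : Tendsto h (𝓝[Ioo (0:ℝ) δ] 0) (𝓝[Ioo (0:ℝ) aY] 0) := by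
        rw [tendsto_nhdsWithin_iff]
        constructor
        · exact hht0.mono_left (nhdsWithin_mono _ Ioo_subset_Ico_self)
        · filter_upwards [self_mem_nhdsWithin] with t ht
          exact ⟨hhpos t ht, (hhmemY t ⟨ht.1.le, ht.2⟩).2⟩
      have hlimhv : Tendsto (fun t => h t / v (h t)) (𝓝[Ioo (0:ℝ) δ] 0) (𝓝 (duY 0)⁻¹) :=
        hlimv.comp hhmap
      have hprod := hlimhv.mul hlimu
      have heq : ∀ t ∈ Ioo (0:ℝ) δ, h t / v (h t) * (u t / t) = slope h 0 t := by
        intro t ht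
        have hut : u t ≠ 0 := ne_of_gt (hupos t ht)
        have ht0 : t ≠ 0 := ne_of_gt ht.1
        rw [slope_def_field, hh0, sub_zero, sub_zero, (hvh t ⟨ht.1.le, ht.2⟩).2]
        field_simp
      have hval : (duY 0)⁻¹ * duX 0 = duX 0 / duY (h 0) := by
        rw [hh0, div_eq_inv_mul]
      rw [← hval]
      refine hprod.congr' ?_
      filter_upwards [self_mem_nhdsWithin] with t ht
      exact heq t ht
    · -- interior point
      have hxI : x ∈ Ioo (0:ℝ) δ := ⟨h0, hx.2⟩
      have huxcc : u x ∈ Ioo (0:ℝ) cc := ⟨hupos x hxI, hucc x hx⟩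
      have hhx : h x ∈ Ioo (0:ℝ) aY := ⟨hhpos x hxI, (hhmemY x hx).2⟩
      have hψc : ContinuousAt ψ (u x) := hψcont (u x) huxcc
      have hψux : ψ (u x) = h x := rfl
      have hvder : HasDerivAt v (duY (h x)) (h x) :=
        (hvd (h x) (hhmemY x hx)).hasDerivAt (mem_nhds_of_Ioo hhx)
      have hvder' : HasDerivAt v (duY (h x)) (ψ (u x)) := by rw [hψux]; exact hvder
      have hfg : ∀ᶠ y in 𝓝 (u x), v (ψ y) = y := by
        filter_upwards [Ioo_mem_nhds huxcc.1 huxcc.2] with y hy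
        exact (hψspec y ⟨hy.1.le, hy.2.le⟩).2
      have hψder : HasDerivAt ψ (duY (h x))⁻¹ (u x) :=
        hvder'.of_local_left_inverse hψc (ne_of_gt (hduYpos (h x) (hhmemY x hx))) hfg
      have huder : HasDerivAt u (duX x) x :=
        (hud x (hsubX hx)).hasDerivAt (mem_nhds_of_Ioo ⟨h0, lt_of_lt_of_le hx.2 hδaX⟩)
      have hcomp := hψder.comp x huder
      have : (duY (h x))⁻¹ * duX x = duX x / duY (h x) := by rw [div_eq_inv_mul]
      rw [this] at hcomp
      exact hcomp.hasDerivWithinAt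
  have hhcont : ContinuousOn h (Ico 0 δ) := fun x hx => (hhd x hx).continuousWithinAt
  -- bootstrap
  have hboot : ∀ k : ℕ, k ≤ m + 1 → ContDiffOn ℝ k h (Ico 0 δ) := by
    intro k
    induction k with
    | zero =>
      intro _
      rw [show ((0:ℕ) : WithTop ℕ∞) = 0 from rfl, contDiffOn_zero]
      exact hhcont
    | succ k IH =>
      intro hk
      have hk' : k ≤ m := by omega
      have hhk : ContDiffOn ℝ k h (Ico 0 δ) := IH (by omega)
      have hmap : MapsTo h (Ico 0 δ) (Ico 0 aY) := fun x hx => hhmemY x hx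
      have hΦ : ContDiffOn ℝ k (fun x => duX x / duY (h x)) (Ico 0 δ) := by
        refine ContDiffOn.div ?_ ?_ ?_
        · exact ((hduXsm.mono hsubX).of_le (by exact_mod_cast hk'))
        · exact (hduYsm.of_le (by exact_mod_cast hk')).comp hhk hmap
        · intro x hx
          exact ne_of_gt (hduYpos (h x) (hhmemY x hx))
      exact Stmt15Aux.contDiffOn_step hΦ hhd
  have hudiff := uniqueDiffOn_Ico (0:ℝ) δ
  refine ⟨δ, hδ, h, hboot (m+1) (le_refl _), hh0, ?_, ?_⟩
  · rw [(hhd 0 ⟨le_refl _, hδ⟩).derivWithin (hudiff 0 ⟨le_refl _, hδ⟩)]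
    rw [hh0]
    exact div_pos (hduXpos 0 ⟨le_refl _, haX⟩) (hduYpos 0 ⟨le_refl _, haY⟩)
  · intro x hx
    rw [(hhd x hx).derivWithin (hudiff x hx)]
    have h1 := hconjX x (hsubX hx)
    have h2 := hconjY (h x) (hhmemY x hx)
    rw [(hvh x hx).2] at h2
    have h3 : duY (h x) ≠ 0 := ne_of_gt (hduYpos (h x) (hhmemY x hx))
    field_simp
    rw [h1, ← h2]
end

section
/- (Reduction lemma for vector fields, low range.) Let ℓ ≥ 1 and 1 ≤ r ≤ ℓ, and let Y be a real-valued function of class C^{ℓ+r} on an interval [0,ε) whose Taylor expansion of order ℓ+r at 0 starts with α·x^{ℓ+1} for some α > 0; that is, Y^{(j)}(0) = 0 for 0 ≤ j ≤ ℓ and Y^{(ℓ+1)}(0) = (ℓ+1)!·α > 0. Then there exists a polynomial map h : ℝ → ℝ with h(0) = 0 and h'(0) > 0 such that h'(x)·Y(x) = (h(x))^{ℓ+1} + o(x^{ℓ+r}) as x → 0⁺. (The vector field Y is smoothly — indeed polynomially — conjugate to a vector field of the form x ↦ x^{ℓ+1} + o(x^{ℓ+r}).) -/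
open Polynomial Set Filter Asymptotics Finset
open scoped Nat

private lemma iterDeriv_congr_set {n : ℕ} {f : ℝ → ℝ} {s t : Set ℝ} {x : ℝ}
    (h : s =ᶠ[nhds x] t) :
    iteratedDerivWithin n f s x = iteratedDerivWithin n f t x := by
  simp only [iteratedDerivWithin_eq_iteratedFDerivWithin, iteratedFDerivWithin_congr_set h]

private lemma iterDeriv_inter {n : ℕ} {f : ℝ → ℝ} {s u : Set ℝ} {x : ℝ} (hu : u ∈ nhds x) :
    iteratedDerivWithin n f (s ∩ u) x = iteratedDerivWithin n f s x := by
  simp only [iteratedDerivWithin_eq_iteratedFDerivWithin, iteratedFDerivWithin_inter hu]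

private lemma peano (M : ℕ) (ε : ℝ) (hε : 0 < ε) (Y : ℝ → ℝ)
    (hY : ContDiffOn ℝ (M+1) Y (Set.Ico 0 ε)) :
    (fun x => Y x - taylorWithinEval Y (M+1) (Set.Ico 0 ε) 0 x)
      =o[nhdsWithin 0 (Set.Ioi 0)] fun x => x ^ (M+1) := by
  set s : Set ℝ := Set.Ico 0 ε with hs
  set D : ℝ → ℝ := iteratedDerivWithin (M+1) Y s with hD
  have h0s : (0:ℝ) ∈ s := by simp [hs, hε]
  have hDc : ContinuousWithinAt D s 0 :=
    (hY.continuousOn_iteratedDerivWithin (by exact_mod_cast le_rfl) (uniqueDiffOn_Ico 0 ε)).continuousWithinAt h0s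
  rw [Asymptotics.isLittleO_iff]
  intro cc hcc
  have hfact : (0:ℝ) < ((M+1) ! : ℝ) := by positivity
  obtain ⟨δ, hδ0, hδ⟩ := Metric.tendsto_nhdsWithin_nhds.1 hDc (cc * ((M+1) ! : ℝ)) (by positivity)
  filter_upwards [Ioo_mem_nhdsGT_of_mem (show (0:ℝ) ∈ Set.Ico 0 (min δ ε) by
    simp [lt_min hδ0 hε])] with x hx
  obtain ⟨hx0, hxm⟩ := hx
  have hxδ : x < δ := lt_of_lt_of_le hxm (min_le_left _ _)
  have hxε : x < ε := lt_of_lt_of_le hxm (min_le_right _ _)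
  have hsub : Set.Icc 0 x ⊆ s := fun y hy => ⟨hy.1, lt_of_le_of_lt hy.2 hxε⟩
  have hf : ContDiffOn ℝ M Y (Set.Icc 0 x) :=
    (hY.of_le (by exact_mod_cast Nat.le_succ M)).mono hsub
  have hf' : DifferentiableOn ℝ (iteratedDerivWithin M Y (Set.Icc 0 x)) (Set.Ioo 0 x) :=
    (((hY.mono hsub).differentiableOn_iteratedDerivWithin
      (by exact_mod_cast Nat.lt_succ_self M) (uniqueDiffOn_Icc hx0))).mono Set.Ioo_subset_Icc_self
  obtain ⟨ξ, hξ, hL⟩ := taylor_mean_remainder_lagrange hx0.ne (by rwa [Set.uIcc_of_le hx0.le])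
    (by rwa [Set.uIcc_of_le hx0.le, Set.uIoo_of_le hx0.le])
  rw [Set.uIoo_of_le hx0.le] at hξ
  rw [Set.uIcc_of_le hx0.le] at hL
  -- identify the iterated derivatives over `Icc 0 x` with those over `s`
  have hξs : iteratedDerivWithin (M+1) Y (Set.Icc 0 x) ξ = D ξ := by
    refine iterDeriv_congr_set ?_
    rw [Filter.eventuallyEq_set]
    filter_upwards [isOpen_Ioo.mem_nhds hξ] with y hy
    exact ⟨fun _ => ⟨hy.1.le, lt_trans hy.2 hxε⟩, fun _ => ⟨hy.1.le, hy.2.le⟩⟩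
  have hder0 : ∀ k : ℕ, iteratedDerivWithin k Y (Set.Icc 0 x) 0 = iteratedDerivWithin k Y s 0 := by
    intro k
    have hint : s ∩ Set.Iic x = Set.Icc 0 x := by
      ext y
      simp only [hs, Set.mem_inter_iff, Set.mem_Ico, Set.mem_Iic, Set.mem_Icc]
      constructor
      · rintro ⟨⟨h1, _⟩, h3⟩; exact ⟨h1, h3⟩
      · rintro ⟨h1, h3⟩; exact ⟨⟨h1, lt_of_le_of_lt h3 hxε⟩, h3⟩
    rw [← hint]
    exact iterDeriv_inter (Iic_mem_nhds hx0)
  have hTay : taylorWithinEval Y M (Set.Icc 0 x) 0 x = taylorWithinEval Y M s 0 x := by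
    rw [taylor_within_apply, taylor_within_apply]
    exact Finset.sum_congr rfl fun k _ => by rw [hder0 k]
  have key : Y x - taylorWithinEval Y (M+1) s 0 x = (D ξ - D 0) * x ^ (M+1) / ((M+1) ! : ℝ) := by
    have h1 : Y x - taylorWithinEval Y (M+1) s 0 x
        = (Y x - taylorWithinEval Y M (Set.Icc 0 x) 0 x)
          - (((M+1 : ℝ) * (M)!)⁻¹ * (x - 0) ^ (M+1)) * D 0 := by
      rw [taylorWithinEval_succ, hTay, smul_eq_mul, ← hD]
      ring
    rw [h1, hL, hξs]
    have h2 : ((M+1) ! : ℝ) = ((M+1:ℝ)) * ((M)! : ℝ) := by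
      rw [Nat.factorial_succ]; push_cast; ring
    rw [h2]
    have h3 : ((M:ℝ)+1) * ((M)! : ℝ) ≠ 0 := by positivity
    field_simp
    ring
  rw [key]
  have hdist : |D ξ - D 0| ≤ cc * ((M+1) ! : ℝ) := by
    have hξs' : ξ ∈ s := ⟨hξ.1.le, lt_trans hξ.2 hxε⟩
    have : dist (D ξ) (D 0) < cc * ((M+1) ! : ℝ) :=
      hδ hξs' (by rw [Real.dist_eq, sub_zero, abs_of_pos hξ.1]; exact lt_trans hξ.2 hxδ)
    rw [Real.dist_eq] at this
    exact this.le
  rw [Real.norm_eq_abs, Real.norm_eq_abs]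
  calc |(D ξ - D 0) * x ^ (M+1) / ((M+1) ! : ℝ)|
      = |D ξ - D 0| * |x ^ (M+1)| / ((M+1) ! : ℝ) := by
        rw [abs_div, abs_mul, Nat.abs_cast]
    _ ≤ (cc * ((M+1) ! : ℝ)) * |x ^ (M+1)| / ((M+1) ! : ℝ) := by gcongr
    _ = cc * |x ^ (M+1)| := by field_simp


private lemma alg_key (ℓ : ℕ) (c α : ℝ) (hc : c ^ ℓ = α) (hα : α ≠ 0)
    (Q : Polynomial ℝ) (hQ : Q.coeff 0 = α) :
    ∀ r : ℕ, 1 ≤ r → r ≤ ℓ →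
    ∃ g : Polynomial ℝ, g.coeff 0 = c ∧
      (X : Polynomial ℝ) ^ r ∣ ((g + X * g.derivative) * Q - g ^ (ℓ + 1)) := by
  have hQ0 : Q.eval 0 = α := by rw [← Polynomial.coeff_zero_eq_eval_zero]; exact hQ
  intro r hr1 hrℓ
  induction r with
  | zero => omega
  | succ k ih =>
    rcases Nat.eq_zero_or_pos k with hk0 | hk1
    · subst hk0
      refine ⟨C c, by simp, ?_⟩
      rw [pow_one, X_dvd_iff]
      simp only [derivative_C, mul_zero, add_zero, coeff_zero_eq_eval_zero, eval_sub,
        eval_mul, eval_C, eval_pow, hQ0]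
      rw [← hc]; ring
    · obtain ⟨g, hg0, W, hW⟩ := ih (by omega) (by omega)
      obtain ⟨m, rfl⟩ := Nat.exists_eq_succ_of_ne_zero (Nat.pos_iff_ne_zero.mp hk1)
      have hg0' : g.eval 0 = c := by rw [← Polynomial.coeff_zero_eq_eval_zero]; exact hg0
      set e : ℝ := W.coeff 0 with he
      have hml : (m:ℝ) + 1 < (ℓ:ℝ) := by
        have h : (m+1 : ℕ) < ℓ := by omega
        exact_mod_cast h
      have hden : α * ((ℓ:ℝ) - ((m:ℝ)+1)) ≠ 0 := by
        apply mul_ne_zero hα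
        have : (0:ℝ) < (ℓ:ℝ) - ((m:ℝ)+1) := by linarith
        linarith
      set t : ℝ := e / (α * ((ℓ:ℝ) - ((m:ℝ)+1))) with ht
      set u : Polynomial ℝ := C t * X ^ (m+1) with hu
      set S : Polynomial ℝ := ∑ i ∈ Finset.range ℓ,
          g ^ i * u ^ (ℓ + 1 - i) * ((ℓ+1).choose i : Polynomial ℝ) with hS
      have hexp : (g + u) ^ (ℓ + 1)
          = S + g ^ ℓ * u * (((ℓ:Polynomial ℝ)) + 1) + g ^ (ℓ + 1) := by
        rw [add_pow, Finset.sum_range_succ, Finset.sum_range_succ]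
        simp only [Nat.sub_self, pow_zero, Nat.choose_self, Nat.cast_one, mul_one,
          Nat.add_sub_cancel_left, pow_one, Nat.choose_succ_self_right]
        push_cast
        ring
      set β : ℝ := t * ((m:ℝ)+1) + t with hβ
      have hu' : u + X * derivative u = C β * X ^ (m+1) := by
        simp only [hu, hβ, derivative_C_mul, derivative_X_pow, Nat.cast_add, Nat.cast_one,
          Nat.add_sub_cancel, C_add, C_mul, C_1]
        ring
      have hgl : (g ^ ℓ).coeff 0 = α := by
        rw [Polynomial.coeff_zero_eq_eval_zero, eval_pow, hg0', hc]
      refine ⟨g + u, ?_, ?_⟩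
      · rw [Polynomial.coeff_zero_eq_eval_zero]
        simp [hu, hg0']
      · have hiden : ((g + u) + X * derivative (g + u)) * Q - (g + u) ^ (ℓ+1)
            = ((g + X * derivative g) * Q - g ^ (ℓ+1))
              + (C β * (X ^ (m+1) * Q)
                 - C (t * ((ℓ:ℝ)+1)) * (X ^ (m+1) * g ^ ℓ)) - S := by
          rw [derivative_add, hexp]
          have h2 : g ^ ℓ * u * (((ℓ:Polynomial ℝ)) + 1)
              = C (t * ((ℓ:ℝ)+1)) * (X ^ (m+1) * g ^ ℓ) := by
            simp only [hu, C_mul, C_add, C_1, C_eq_natCast]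
            ring
          linear_combination Q * hu' - h2
        rw [hiden, hW]
        have hd1 : (X : Polynomial ℝ) ^ (m+2) ∣ S := by
          rw [hS]
          refine Finset.dvd_sum ?_
          intro i hi
          have h2i : 2 ≤ ℓ + 1 - i := by
            simp only [Finset.mem_range] at hi; omega
          have : (X : Polynomial ℝ) ^ (m+2) ∣ u ^ (ℓ + 1 - i) := by
            rw [hu, mul_pow, ← pow_mul]
            refine Dvd.dvd.mul_left ?_ _
            refine pow_dvd_pow X ?_
            calc m + 2 ≤ (m+1) * 2 := by omega
              _ ≤ (m+1) * (ℓ + 1 - i) := Nat.mul_le_mul_left _ h2i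
          exact ((this.mul_left _).mul_right _)
        have hd2 : (X : Polynomial ℝ) ^ (m+2) ∣
            (X ^ (m+1) * W + (C β * (X ^ (m+1) * Q)
              - C (t * ((ℓ:ℝ)+1)) * (X ^ (m+1) * g ^ ℓ))) := by
          have hfac : (X ^ (m+1) * W + (C β * (X ^ (m+1) * Q)
              - C (t * ((ℓ:ℝ)+1)) * (X ^ (m+1) * g ^ ℓ)))
              = X ^ (m+1) * (W + C β * Q - C (t * ((ℓ:ℝ)+1)) * g ^ ℓ) := by
            ring
          rw [hfac, pow_succ]
          refine mul_dvd_mul_left _ ?_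
          rw [X_dvd_iff]
          simp only [coeff_sub, coeff_add, coeff_C_mul]
          rw [hQ, hgl, ← he]
          rw [hβ, ht]
          have hne : (ℓ:ℝ) - ((m:ℝ)+1) ≠ 0 := (sub_pos.2 hml).ne'
          field_simp
          ring
        exact dvd_sub hd2 hd1


/-- Reduction lemma for vector fields (low range `1 ≤ r ≤ ℓ`): a `C^{ℓ+r}` vector field
whose Taylor expansion of order `ℓ+r` at `0` starts with `α·x^{ℓ+1}` (`α > 0`) is
polynomially conjugate to a vector field of the form `x ↦ x^{ℓ+1} + o(x^{ℓ+r})`. -/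
theorem stmt_16 (ℓ r : ℕ) (hℓ : 1 ≤ ℓ) (hr1 : 1 ≤ r) (hrℓ : r ≤ ℓ)
    (ε : ℝ) (hε : 0 < ε) (Y : ℝ → ℝ) (α : ℝ) (hα : 0 < α)
    (hY : ContDiffOn ℝ (ℓ + r : ℕ) Y (Set.Ico 0 ε))
    (hYj : ∀ j, j ≤ ℓ → iteratedDerivWithin j Y (Set.Ico 0 ε) 0 = 0)
    (hYl : iteratedDerivWithin (ℓ + 1) Y (Set.Ico 0 ε) 0 = (Nat.factorial (ℓ + 1) : ℝ) * α) :
    ∃ p : Polynomial ℝ,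
      p.eval 0 = 0 ∧ 0 < p.derivative.eval 0 ∧
      Asymptotics.IsLittleO (nhdsWithin 0 (Set.Ioi 0))
        (fun x : ℝ => p.derivative.eval x * Y x - (p.eval x) ^ (ℓ + 1))
        (fun x : ℝ => x ^ (ℓ + r)) := by
  classical
  set s : Set ℝ := Set.Ico 0 ε with hs
  set N : ℕ := ℓ + r with hN
  set Q : Polynomial ℝ := ∑ j ∈ Finset.range r,
      C (iteratedDerivWithin (ℓ+1+j) Y s 0 / ((ℓ+1+j) ! : ℝ)) * X ^ j with hQdef
  have hQ0 : Q.coeff 0 = α := by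
    rw [Polynomial.coeff_zero_eq_eval_zero, hQdef, Polynomial.eval_finset_sum]
    simp only [eval_mul, eval_pow, eval_C, eval_X]
    rw [Finset.sum_eq_single 0]
    · have : ℓ + 1 + 0 = ℓ + 1 := by omega
      rw [this, hYl, pow_zero, mul_one]
      have hf : ((ℓ+1) ! : ℝ) ≠ 0 := by positivity
      field_simp
    · intro b _ hb
      rw [zero_pow hb, mul_zero]
    · intro h
      exact absurd (Finset.mem_range.2 (by omega)) h
  set P : Polynomial ℝ := X ^ (ℓ+1) * Q with hPdef
  have hPeval : ∀ x : ℝ, P.eval x = taylorWithinEval Y N s 0 x := by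
    intro x
    rw [taylor_within_apply]
    have hsplit : ∑ k ∈ Finset.range (N+1),
          (((k ! : ℝ))⁻¹ * (x - 0)^k) • iteratedDerivWithin k Y s 0
        = ∑ k ∈ Finset.range (ℓ+1), (((k ! : ℝ))⁻¹ * (x-0)^k) • iteratedDerivWithin k Y s 0
          + ∑ j ∈ Finset.range r,
              ((((ℓ+1+j) ! : ℝ))⁻¹ * (x-0)^(ℓ+1+j)) • iteratedDerivWithin (ℓ+1+j) Y s 0 := by
      rw [show N + 1 = (ℓ+1) + r by omega, Finset.sum_range_add]
    rw [hsplit]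
    have h1 : ∑ k ∈ Finset.range (ℓ+1),
        (((k ! : ℝ))⁻¹ * (x-0)^k) • iteratedDerivWithin k Y s 0 = 0 := by
      apply Finset.sum_eq_zero
      intro k hk
      rw [hYj k (by simpa using Nat.lt_succ_iff.1 (Finset.mem_range.1 hk)), smul_eq_mul, mul_zero]
    rw [h1, zero_add, hPdef, Polynomial.eval_mul, Polynomial.eval_pow, Polynomial.eval_X,
      hQdef, Polynomial.eval_finset_sum, Finset.mul_sum]
    refine Finset.sum_congr rfl ?_
    intro j _
    simp only [eval_mul, eval_pow, eval_C, eval_X, smul_eq_mul, sub_zero]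
    rw [pow_add]
    have hf : (((ℓ+1+j) !  : ℝ)) ≠ 0 := by positivity
    field_simp
    ring
  set c : ℝ := α ^ ((ℓ:ℝ))⁻¹ with hcdef
  have hc : c ^ ℓ = α := Real.rpow_inv_natCast_pow hα.le (by omega)
  have hcpos : 0 < c := Real.rpow_pos_of_pos hα _
  obtain ⟨g, hg0, hdvd⟩ := alg_key ℓ c α hc (ne_of_gt hα) Q hQ0 r hr1 hrℓ
  obtain ⟨W, hW⟩ := hdvd
  have hg0' : g.eval 0 = c := by rw [← Polynomial.coeff_zero_eq_eval_zero]; exact hg0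
  refine ⟨X * g, by simp, ?_, ?_⟩
  · have hde : (X * g).derivative.eval 0 = c := by
      simp [Polynomial.derivative_mul, hg0']
    rw [hde]; exact hcpos
  · have hE : (X * g).derivative * P - (X * g)^(ℓ+1) = X ^ (N+1) * W := by
      have h1 : (X * g).derivative = g + X * g.derivative := by
        rw [Polynomial.derivative_mul, Polynomial.derivative_X, one_mul]
      rw [h1, hPdef, mul_pow]
      have h2 : (X:Polynomial ℝ) ^ (N+1) = X ^ (ℓ+1) * X ^ r := by
        rw [← pow_add]; congr 1; omega
      rw [h2, mul_assoc, ← hW]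
      ring
    have hfun : (fun x : ℝ => (X*g).derivative.eval x * Y x - ((X*g).eval x)^(ℓ+1))
        = fun x : ℝ => (X*g).derivative.eval x * (Y x - taylorWithinEval Y N s 0 x)
          + (x^(N+1) * W.eval x) := by
      funext x
      have e1 : (x:ℝ)^(N+1) * W.eval x
          = ((X*g).derivative * P - (X*g)^(ℓ+1)).eval x := by
        rw [hE]; simp
      rw [e1, ← hPeval x]
      simp only [Polynomial.eval_sub, Polynomial.eval_mul, Polynomial.eval_pow]
      ring
    have hNsucc : ∃ M : ℕ, N = M + 1 := ⟨N - 1, by omega⟩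
    obtain ⟨M, hM⟩ := hNsucc
    have hA : (fun x : ℝ => (X*g).derivative.eval x * (Y x - taylorWithinEval Y N s 0 x))
        =o[nhdsWithin 0 (Set.Ioi 0)] fun x : ℝ => x ^ N := by
      have h1 : Filter.Tendsto (fun x : ℝ => (X*g).derivative.eval x)
          (nhdsWithin 0 (Set.Ioi 0)) (nhds ((X*g).derivative.eval 0)) :=
        (((X*g).derivative.continuous).tendsto 0).mono_left nhdsWithin_le_nhds
      have h2 : ContDiffOn ℝ (M+1) Y s := by
        have : ContDiffOn ℝ (N:ℕ) Y s := hY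
        rw [hM] at this
        exact_mod_cast this
      have h3 := peano M ε hε Y h2
      rw [← hM] at h3
      simpa using (h1.isBigO_one ℝ).mul_isLittleO h3
    have hB : (fun x : ℝ => x^(N+1) * W.eval x)
        =o[nhdsWithin 0 (Set.Ioi 0)] fun x : ℝ => x ^ N := by
      have h1 : Filter.Tendsto (fun x : ℝ => x * W.eval x)
          (nhdsWithin 0 (Set.Ioi 0)) (nhds 0) := by
        have h0 := (continuous_id.mul W.continuous).tendsto' 0 0 (by simp)
        exact h0.mono_left nhdsWithin_le_nhds
      have h2 : (fun x : ℝ => x * W.eval x)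
          =o[nhdsWithin 0 (Set.Ioi 0)] (fun _ : ℝ => (1:ℝ)) :=
        (Asymptotics.isLittleO_one_iff ℝ).2 h1
      have h3 := h2.mul_isBigO (Asymptotics.isBigO_refl (fun x : ℝ => x ^ N)
        (nhdsWithin 0 (Set.Ioi 0)))
      have h4 : (fun x : ℝ => x^(N+1) * W.eval x) = fun x : ℝ => (x * W.eval x) * x^N := by
        funext x; ring
      rw [h4]
      simpa using h3
    rw [hfun]
    exact hA.add hB
end

section
/- (Reduction lemma for vector fields, high range.) Let ℓ ≥ 1 and r ≥ ℓ + 1, and let Y be a real-valued function of class C^{ℓ+r} on an interval [0,ε) whose Taylor expansion of order ℓ+r at 0 starts with α·x^{ℓ+1} for some α > 0; that is, Y^{(j)}(0) = 0 for 0 ≤ j ≤ ℓ and Y^{(ℓ+1)}(0) = (ℓ+1)!·α > 0. Then there exist a polynomial map h : ℝ → ℝ with h(0) = 0 and h'(0) > 0 and a real number μ such that h'(x)·Y(x) = (h(x))^{ℓ+1} + μ·(h(x))^{2ℓ+1} + o(x^{ℓ+r}) as x → 0⁺. (The vector field Y is smoothly conjugate to a vector field of the form x ↦ x^{ℓ+1}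 + μx^{2ℓ+1} + o(x^{ℓ+r}).) -/
open Polynomial Set Filter Asymptotics

private lemma aux_pow_sub_pow {p u : Polynomial ℝ} (a : ℕ) (hp : X ∣ p) (hu : X ∣ u)
    (h : X ^ a ∣ p - u) : ∀ n : ℕ, X ^ (a + n) ∣ p ^ (n + 1) - u ^ (n + 1) := by
  intro n
  induction n with
  | zero => simpa using h
  | succ n ih =>
      have key : p ^ (n + 2) - u ^ (n + 2)
          = p ^ (n + 1) * (p - u) + u * (p ^ (n + 1) - u ^ (n + 1)) := by ring
      rw [key]
      refine dvd_add ?_ ?_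
      · refine (pow_dvd_pow X (show a + (n+1) ≤ n + 1 + a by omega)).trans ?_
        rw [pow_add]
        exact mul_dvd_mul (pow_dvd_pow_of_dvd hp _) h
      · refine (pow_dvd_pow X (show a + (n+1) ≤ 1 + (a + n) by omega)).trans ?_
        rw [pow_add, pow_one]
        exact mul_dvd_mul hu ih

private lemma aux_binom {p q : Polynomial ℝ} (b : ℕ) (hp : X ∣ p) (hq : X ^ (b + 1) ∣ q) :
    ∀ n : ℕ, X ^ (2 * b + 2 + n) ∣
      (p + q) ^ (n + 2) - p ^ (n + 2) - C ((n : ℝ) + 2) * (q * p ^ (n + 1)) := by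
  have hq1 : X ∣ q := dvd_trans (dvd_pow_self X (Nat.succ_ne_zero b)) hq
  intro n
  induction n with
  | zero =>
      have h0 : (p + q) ^ (0 + 2) - p ^ (0 + 2) - C (((0:ℕ) : ℝ) + 2) * (q * p ^ (0 + 1))
          = q ^ 2 := by
        rw [show (((0:ℕ) : ℝ) + 2) = 1 + 1 by norm_num, C_add, C_1]; ring
      rw [h0, show 2 * b + 2 + 0 = (b + 1) * 2 by ring, pow_mul]
      exact pow_dvd_pow_of_dvd hq 2
  | succ n ih =>
      have hC : C (((n+1 : ℕ) : ℝ) + 2) = C ((n : ℝ) + 2) + 1 := by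
        rw [show (((n+1 : ℕ) : ℝ) + 2) = ((n : ℝ) + 2) + 1 by push_cast; ring, C_add, C_1]
      have key : (p + q) ^ (n + 1 + 2) - p ^ (n + 1 + 2)
            - C (((n+1 : ℕ) : ℝ) + 2) * (q * p ^ (n + 1 + 1))
          = (p + q) * ((p + q) ^ (n + 2) - p ^ (n + 2) - C ((n : ℝ) + 2) * (q * p ^ (n + 1)))
            + (C ((n : ℝ) + 2)) * (q ^ 2 * p ^ (n + 1)) := by
        rw [hC]; ring
      rw [key]
      refine dvd_add ?_ ?_
      · refine (pow_dvd_pow X (show 2*b+2+(n+1) ≤ 1 + (2*b+2+n) by omega)).trans ?_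
        rw [pow_add, pow_one]
        exact mul_dvd_mul (by simpa using dvd_add hp hq1) ih
      · refine Dvd.dvd.mul_left ?_ _
        refine (pow_dvd_pow X (show 2*b+2+(n+1) ≤ (b+1)*2 + (n+1) by omega)).trans ?_
        rw [pow_add, pow_mul]
        exact mul_dvd_mul (pow_dvd_pow_of_dvd hq 2) (pow_dvd_pow_of_dvd hp _)

private lemma aux_reduce (k : ℕ) (T : Polynomial ℝ) (α c₁ : ℝ)
    (hα : α ≠ 0) (hc : c₁ ^ (k + 1) = α) (hc₁ : c₁ ≠ 0)
    (hT : X ^ (k + 3) ∣ T - C α * X ^ (k + 2)) :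
    ∀ m : ℕ, 1 ≤ m → ∃ p : Polynomial ℝ, ∃ μ : ℝ,
      p.coeff 0 = 0 ∧ p.coeff 1 = c₁ ∧
      X ^ (k + 1 + m + 1) ∣ p.derivative * T - p ^ (k + 2) - C μ * p ^ (2 * (k + 1) + 1) := by
  -- here ℓ = k + 1
  intro m hm
  induction m, hm using Nat.le_induction with
  | base =>
      refine ⟨C c₁ * X, 0, by simp, by simp, ?_⟩
      have h1 : (C c₁ * X : Polynomial ℝ).derivative = C c₁ := by simp
      have h2 : (C c₁ * X : Polynomial ℝ) ^ (k + 2) = C c₁ * (C α * X ^ (k + 2)) := by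
        rw [mul_pow, ← C_pow, show c₁ ^ (k+2) = c₁ * α by rw [← hc]; ring, C_mul, mul_assoc]
      have key : (C c₁ * X : Polynomial ℝ).derivative * T - (C c₁ * X) ^ (k + 2)
            - C (0:ℝ) * (C c₁ * X) ^ (2 * (k + 1) + 1)
          = C c₁ * (T - C α * X ^ (k + 2)) := by
        rw [h1, h2]; simp [mul_sub]
      rw [show k + 1 + 1 + 1 = k + 3 by ring, key]
      exact hT.mul_left _
  | succ m hm ih =>
      obtain ⟨p, μ, h0, h1, hdvd⟩ := ih
      obtain ⟨g, hg⟩ := hdvd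
      set e := g.coeff 0 with he
      have hXp : X ∣ p := X_dvd_iff.2 h0
      have hXq2 : X ^ 2 ∣ p - C c₁ * X := by
        rw [X_pow_dvd_iff]
        intro d hd
        interval_cases d <;> simp [h0, h1]
      have hEe : X ^ (k + 1 + m + 2) ∣
          (p.derivative * T - p ^ (k + 2) - C μ * p ^ (2 * (k + 1) + 1))
            - C e * X ^ (k + 1 + m + 1) := by
        have : (p.derivative * T - p ^ (k + 2) - C μ * p ^ (2 * (k + 1) + 1))
              - C e * X ^ (k + 1 + m + 1) = X ^ (k + 1 + m + 1) * (g - C e) := by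
          rw [hg]; ring
        rw [this, show k + 1 + m + 2 = (k + 1 + m + 1) + 1 by ring, pow_succ]
        exact mul_dvd_mul_left _ (X_dvd_iff.2 (by simp [he]))
      -- p^ℓ close to (c₁ X)^ℓ : X^(k+2) ∣ p^(k+1) - C (c₁^(k+1)) * X^(k+1)
      have hplow : X ^ (k + 2) ∣ p ^ (k + 1) - C (c₁ ^ (k + 1)) * X ^ (k + 1) := by
        have := aux_pow_sub_pow 2 hXp (by exact Dvd.dvd.mul_left (dvd_refl X) _) hXq2 k
        rwa [show (C c₁ * X) ^ (k+1) = C (c₁ ^ (k+1)) * X ^ (k+1) by rw [mul_pow, C_pow],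
          show 2 + k = k + 2 by ring] at this
      rw [hc] at hplow
      by_cases hmk : m = k + 1
      · -- resonant step: adjust μ
        subst hmk
        refine ⟨p, μ + e / c₁ ^ (2 * (k + 1) + 1), h0, h1, ?_⟩
        have hres : X ^ (2 * (k + 1) + 2) ∣
            p ^ (2 * (k + 1) + 1) - C (c₁ ^ (2 * (k + 1) + 1)) * X ^ (2 * (k + 1) + 1) := by
          have := aux_pow_sub_pow 2 hXp (by exact Dvd.dvd.mul_left (dvd_refl X) _) hXq2
            (2 * (k + 1))
          rwa [show (C c₁ * X) ^ (2*(k+1)+1) = C (c₁ ^ (2*(k+1)+1)) * X ^ (2*(k+1)+1) by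
              rw [mul_pow, C_pow], show 2 + 2*(k+1) = 2*(k+1)+2 by ring] at this
        have hce : c₁ ^ (2 * (k + 1) + 1) ≠ 0 := pow_ne_zero _ hc₁
        have key : p.derivative * T - p ^ (k + 2)
              - C (μ + e / c₁ ^ (2 * (k + 1) + 1)) * p ^ (2 * (k + 1) + 1)
            = ((p.derivative * T - p ^ (k + 2) - C μ * p ^ (2 * (k + 1) + 1))
                - C e * X ^ (k + 1 + (k + 1) + 1))
              - C (e / c₁ ^ (2 * (k + 1) + 1)) *
                (p ^ (2 * (k + 1) + 1) - C (c₁ ^ (2 * (k + 1) + 1)) * X ^ (2 * (k + 1) + 1)) := by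
        -- uses (e/c)·c = e and k+1+(k+1)+1 = 2(k+1)+1
          have hdc : C (e / c₁ ^ (2 * (k + 1) + 1)) * C (c₁ ^ (2 * (k + 1) + 1)) = C e := by
            rw [← C_mul, div_mul_cancel₀ _ hce]
          rw [C_add]
          rw [show k + 1 + (k + 1) + 1 = 2 * (k + 1) + 1 by ring]
          calc p.derivative * T - p ^ (k + 2)
              - (C μ + C (e / c₁ ^ (2 * (k + 1) + 1))) * p ^ (2 * (k + 1) + 1)
              = (p.derivative * T - p ^ (k + 2) - C μ * p ^ (2 * (k + 1) + 1)
                  - (C (e / c₁ ^ (2 * (k + 1) + 1)) * C (c₁ ^ (2 * (k + 1) + 1)))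
                    * X ^ (2 * (k + 1) + 1))
                - C (e / c₁ ^ (2 * (k + 1) + 1)) *
                  (p ^ (2 * (k + 1) + 1) - C (c₁ ^ (2 * (k + 1) + 1)) * X ^ (2 * (k + 1) + 1)) := by
                ring
              _ = _ := by rw [hdc]
        rw [show k + 1 + (k + 1 + 1) + 1 = 2 * (k + 1) + 2 by ring, key]
        refine dvd_sub ?_ (Dvd.dvd.mul_left hres _)
        · have := hEe
          rwa [show k + 1 + (k + 1) + 2 = 2 * (k + 1) + 2 by ring] at this
      · -- non resonant: add t·X^(m+1) to p
        set t := e / (α * ((k : ℝ) + 1 - m)) with ht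
        have hden : α * ((k : ℝ) + 1 - m) ≠ 0 := by
          refine mul_ne_zero hα ?_
          have : (m : ℝ) ≠ (k : ℝ) + 1 := by
            exact_mod_cast (by omega : m ≠ k + 1)
          intro hcon
          apply this
          linarith
        set q : Polynomial ℝ := C t * X ^ (m + 1) with hqdef
        have hXq : X ^ (m + 1) ∣ q := Dvd.dvd.mul_left (dvd_refl _) _
        refine ⟨p + q, μ, ?_, ?_, ?_⟩
        · simp [hqdef, h0, coeff_X_pow]
        · rw [coeff_add, h1, hqdef, coeff_C_mul, coeff_X_pow, if_neg (by omega)]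
          simp
        · -- main divisibility
          have hqd : q.derivative = C (t * ((m : ℝ) + 1)) * X ^ m := by
            rw [hqdef, derivative_C_mul, derivative_X_pow]
            push_cast
            rw [C_mul]
            ring
          have hD1 := aux_binom m hXp hXq k
          have hXq1 : X ∣ q := dvd_trans (dvd_pow_self X (Nat.succ_ne_zero m)) hXq
          have hXpq : X ∣ p + q := dvd_add hXp hXq1
          have hqsub : X ^ (m + 1) ∣ (p + q) - p := by simpa using hXq
          have hF := aux_pow_sub_pow (m + 1) hXpq hXp hqsub (2 * (k + 1))
          -- scalar vanishing
          have hs : e + t * ((m : ℝ) + 1) * α - t * ((k : ℝ) + 2) * α = 0 := by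
            rw [ht]; linear_combination -(div_mul_cancel₀ e hden)
          -- the big identity
          have key : (p + q).derivative * T - (p + q) ^ (k + 2)
                - C μ * (p + q) ^ (2 * (k + 1) + 1)
              = ((p.derivative * T - p ^ (k + 2) - C μ * p ^ (2 * (k + 1) + 1))
                  - C e * X ^ (k + 1 + m + 1))
                + C (t * ((m : ℝ) + 1)) * X ^ m * (T - C α * X ^ (k + 2))
                - ((p + q) ^ (k + 2) - p ^ (k + 2) - C ((k : ℝ) + 2) * (q * p ^ (k + 1)))
                - C ((k : ℝ) + 2) * q * (p ^ (k + 1) - C α * X ^ (k + 1))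
                - C μ * ((p + q) ^ (2 * (k + 1) + 1) - p ^ (2 * (k + 1) + 1))
                + C (e + t * ((m : ℝ) + 1) * α - t * ((k : ℝ) + 2) * α)
                  * X ^ (k + 1 + m + 1) := by
            rw [derivative_add, hqd, hqdef]
            simp only [C_add, C_sub, C_mul]
            ring
          rw [key, hs]
          simp only [map_zero, zero_mul, add_zero]
          have e2 : k + 1 + (m + 1) + 1 = k + 1 + m + 2 := by ring
          refine dvd_sub (dvd_sub (dvd_sub (dvd_add ?_ ?_) ?_) ?_) ?_
          · rw [e2]; exact hEe
          · rw [e2]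
            refine (pow_dvd_pow X (show k+1+m+2 ≤ m + (k+3) by omega)).trans ?_
            rw [pow_add]
            exact mul_dvd_mul (Dvd.dvd.mul_left (dvd_refl _) _) hT
          · rw [e2]
            exact (pow_dvd_pow X (show k+1+m+2 ≤ 2*m+2+k by omega)).trans hD1
          · rw [e2, mul_assoc]
            refine Dvd.dvd.mul_left ?_ _
            refine (pow_dvd_pow X (show k+1+m+2 ≤ (m+1) + (k+2) by omega)).trans ?_
            rw [pow_add]
            exact mul_dvd_mul hXq hplow
          · rw [e2]
            refine Dvd.dvd.mul_left ?_ _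
            refine (pow_dvd_pow X (show k+1+m+2 ≤ m+1+2*(k+1) by omega)).trans ?_
            exact hF

private lemma aux_iteratedDerivWithin_congr_set {f : ℝ → ℝ} {s t : Set ℝ} {x : ℝ}
    (h : s =ᶠ[nhds x] t) (n : ℕ) :
    iteratedDerivWithin n f s x = iteratedDerivWithin n f t x := by
  simp only [iteratedDerivWithin_eq_iteratedFDerivWithin,
    iteratedFDerivWithin_congr_set h n]

private lemma aux_peano (m : ℕ) (ε : ℝ) (hε : 0 < ε) (Y : ℝ → ℝ)
    (hY : ContDiffOn ℝ (m + 1 : ℕ) Y (Set.Ico 0 ε)) :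
    (fun x : ℝ => Y x - ∑ j ∈ Finset.range (m + 2),
        (iteratedDerivWithin j Y (Set.Ico 0 ε) 0 / j.factorial) * x ^ j)
      =o[nhdsWithin 0 (Set.Ioi 0)] fun x : ℝ => x ^ (m + 1) := by
  set d : ℕ → ℝ := fun j => iteratedDerivWithin j Y (Set.Ico 0 ε) 0 with hd
  set g : ℝ → ℝ := iteratedDerivWithin (m + 1) Y (Set.Ico 0 ε) with hgdef
  have hgc : ContinuousOn g (Set.Ico 0 ε) :=
    hY.continuousOn_iteratedDerivWithin (le_refl _) (uniqueDiffOn_Ico 0 ε)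
  rw [Asymptotics.isLittleO_iff]
  intro c hc
  have hfac : (0:ℝ) < (m + 1).factorial := by positivity
  have hδ : (0:ℝ) < c * (m + 1).factorial := by positivity
  have h0mem : (0:ℝ) ∈ Set.Ico 0 ε := ⟨le_refl _, hε⟩
  have hcont : ContinuousWithinAt g (Set.Ico 0 ε) 0 := hgc 0 h0mem
  rw [Metric.continuousWithinAt_iff] at hcont
  obtain ⟨η, hη, hball⟩ := hcont _ hδ
  set η' := min η ε with hη'
  have hη'pos : 0 < η' := lt_min hη hε
  filter_upwards [Ioo_mem_nhdsGT_of_mem (Set.left_mem_Ico.2 hη'pos)] with x hx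
  have hx0 : 0 < x := hx.1
  have hxη : x < η := lt_of_lt_of_le hx.2 (min_le_left _ _)
  have hxε : x < ε := lt_of_lt_of_le hx.2 (min_le_right _ _)
  have hsub : Set.Icc (0:ℝ) x ⊆ Set.Ico 0 ε := fun y hy => ⟨hy.1, lt_of_le_of_lt hy.2 hxε⟩
  -- Lagrange remainder at order m
  have hfc : ContDiffOn ℝ m Y (Set.Icc 0 x) :=
    (hY.of_le (by exact_mod_cast Nat.le_succ m)).mono hsub
  have hf' : DifferentiableOn ℝ (iteratedDerivWithin m Y (Set.Icc 0 x)) (Set.Ioo 0 x) :=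
    ((hY.mono hsub).differentiableOn_iteratedDerivWithin
      (by exact_mod_cast Nat.lt_succ_self m) (uniqueDiffOn_Icc hx0)).mono Set.Ioo_subset_Icc_self
  obtain ⟨x', hx', hR⟩ := taylor_mean_remainder_lagrange hx0.ne (by rwa [Set.uIcc_of_le hx0.le]) (by rwa [Set.uIcc_of_le hx0.le, Set.uIoo_of_le hx0.le])
  rw [Set.uIoo_of_le hx0.le] at hx'
  rw [Set.uIcc_of_le hx0.le] at hR
  -- set congruences
  have hset0 : Set.Icc (0:ℝ) x =ᶠ[nhds 0] Set.Ico (0:ℝ) ε := by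
    rw [Filter.eventuallyEq_set]
    filter_upwards [Iio_mem_nhds (lt_min hx0 hε)] with y hy
    have h1 : y < x := lt_of_lt_of_le hy (min_le_left _ _)
    have h2 : y < ε := lt_of_lt_of_le hy (min_le_right _ _)
    simp only [Set.mem_Icc, Set.mem_Ico]
    constructor
    · rintro ⟨a, _⟩; exact ⟨a, h2⟩
    · rintro ⟨a, _⟩; exact ⟨a, le_of_lt h1⟩
  have hsetx' : Set.Icc (0:ℝ) x =ᶠ[nhds x'] Set.Ico (0:ℝ) ε := by
    rw [Filter.eventuallyEq_set]
    filter_upwards [Ioo_mem_nhds hx'.1 hx'.2] with y hy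
    simp only [Set.mem_Icc, Set.mem_Ico]
    constructor
    · intro _; exact ⟨le_of_lt hy.1, lt_trans hy.2 hxε⟩
    · intro _; exact ⟨le_of_lt hy.1, le_of_lt hy.2⟩
  -- rewrite the taylor polynomial
  have htay : taylorWithinEval Y m (Set.Icc 0 x) 0 x
      = ∑ j ∈ Finset.range (m + 1), (d j / j.factorial) * x ^ j := by
    rw [taylor_within_apply]
    refine Finset.sum_congr rfl fun j _ => ?_
    rw [aux_iteratedDerivWithin_congr_set hset0]
    simp only [sub_zero, smul_eq_mul, hd]
    ring
  have hiter : iteratedDerivWithin (m + 1) Y (Set.Icc 0 x) x' = g x' :=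
    aux_iteratedDerivWithin_congr_set hsetx' (m + 1)
  -- main estimate
  have hmain : Y x - ∑ j ∈ Finset.range (m + 2), (d j / j.factorial) * x ^ j
      = (g x' - g 0) * x ^ (m + 1) / (m + 1).factorial := by
    rw [Finset.sum_range_succ, ← htay]
    have hd0 : d (m + 1) = g 0 := rfl
    rw [hd0]
    have := hR
    rw [hiter, sub_zero] at this
    rw [show Y x - (taylorWithinEval Y m (Set.Icc 0 x) 0 x + g 0 / ↑(m + 1).factorial * x ^ (m+1))
        = (Y x - taylorWithinEval Y m (Set.Icc 0 x) 0 x) - g 0 / ↑(m + 1).factorial * x ^ (m+1)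
        by ring, this]
    field_simp
  rw [hmain]
  have hx'mem : x' ∈ Set.Ico 0 ε := ⟨le_of_lt hx'.1, lt_trans hx'.2 hxε⟩
  have hx'close : dist x' 0 < η := by
    rw [Real.dist_eq, sub_zero, abs_of_pos hx'.1]
    exact lt_trans hx'.2 hxη
  have hgb : |g x' - g 0| < c * (m + 1).factorial := by
    have := hball hx'mem hx'close
    rwa [Real.dist_eq] at this
  rw [Real.norm_eq_abs, Real.norm_eq_abs, abs_div, abs_mul]
  rw [abs_of_pos (by positivity : (0:ℝ) < ((m+1).factorial : ℝ))]
  rw [div_le_iff₀ hfac]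
  have h1 : |x ^ (m+1)| = x ^ (m+1) := abs_of_pos (by positivity)
  rw [h1]
  calc |g x' - g 0| * x ^ (m + 1) ≤ (c * (m+1).factorial) * x ^ (m+1) := by
        apply mul_le_mul_of_nonneg_right (le_of_lt hgb) (by positivity)
    _ = c * x ^ (m + 1) * ↑(m + 1).factorial := by ring

/-- Reduction lemma for vector fields (high range `r ≥ ℓ+1`): a `C^{ℓ+r}` vector field
whose Taylor expansion of order `ℓ+r` at `0` starts with `α·x^{ℓ+1}` (`α > 0`) is
polynomially conjugate to a vector field of the form
`x ↦ x^{ℓ+1} + μx^{2ℓ+1} + o(x^{ℓ+r})`. -/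
theorem stmt_17 (ℓ r : ℕ) (hℓ : 1 ≤ ℓ) (hr : ℓ + 1 ≤ r)
    (ε : ℝ) (hε : 0 < ε) (Y : ℝ → ℝ) (α : ℝ) (hα : 0 < α)
    (hY : ContDiffOn ℝ (ℓ + r : ℕ) Y (Set.Ico 0 ε))
    (hYj : ∀ j, j ≤ ℓ → iteratedDerivWithin j Y (Set.Ico 0 ε) 0 = 0)
    (hYl : iteratedDerivWithin (ℓ + 1) Y (Set.Ico 0 ε) 0 = (Nat.factorial (ℓ + 1) : ℝ) * α) :
    ∃ (p : Polynomial ℝ) (μ : ℝ),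
      p.eval 0 = 0 ∧ 0 < p.derivative.eval 0 ∧
      Asymptotics.IsLittleO (nhdsWithin 0 (Set.Ioi 0))
        (fun x : ℝ => p.derivative.eval x * Y x
          - ((p.eval x) ^ (ℓ + 1) + μ * (p.eval x) ^ (2 * ℓ + 1)))
        (fun x : ℝ => x ^ (ℓ + r)) := by
  obtain ⟨k, rfl⟩ : ∃ k, ℓ = k + 1 := ⟨ℓ - 1, (Nat.succ_pred_eq_of_pos hℓ).symm⟩
  set n : ℕ := k + 1 + r with hn
  set d : ℕ → ℝ := fun j => iteratedDerivWithin j Y (Set.Ico 0 ε) 0 with hd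
  set T : Polynomial ℝ := ∑ j ∈ Finset.range (n + 1), C (d j / j.factorial) * X ^ j with hT
  -- coefficients of T
  have hTcoeff : ∀ i, T.coeff i = if i ≤ n then d i / i.factorial else 0 := by
    intro i
    rw [hT, finset_sum_coeff]
    simp only [coeff_C_mul, coeff_X_pow, mul_ite, mul_one, mul_zero]
    rw [Finset.sum_ite_eq (Finset.range (n + 1)) i]
    simp [Finset.mem_range, Nat.lt_succ_iff]
  -- divisibility of T - α X^(ℓ+1)
  have hTdvd : X ^ (k + 3) ∣ T - C α * X ^ (k + 2) := by
    rw [X_pow_dvd_iff]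
    intro i hi
    rw [coeff_sub, hTcoeff, coeff_C_mul, coeff_X_pow]
    have hin : i ≤ n := by omega
    rw [if_pos hin]
    rcases Nat.lt_or_ge i (k + 2) with h | h
    · rw [if_neg (by omega)]
      have : d i = 0 := hYj i (by omega)
      simp [this]
    · have hik : i = k + 2 := by omega
      subst hik
      rw [if_pos rfl]
      have : d (k + 2) = ((k + 2).factorial : ℝ) * α := hYl
      rw [this, mul_one]
      field_simp; ring
  -- c₁
  set c₁ : ℝ := α ^ (((k : ℝ) + 1)⁻¹) with hc₁def
  have hc₁pos : 0 < c₁ := Real.rpow_pos_of_pos hα _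
  have hc : c₁ ^ (k + 1) = α := by
    rw [hc₁def, ← Real.rpow_natCast (α ^ (((k : ℝ) + 1)⁻¹)) (k + 1), ← Real.rpow_mul hα.le]
    rw [show ((k + 1 : ℕ) : ℝ) = (k : ℝ) + 1 by push_cast; ring]
    rw [inv_mul_cancel₀ (by positivity), Real.rpow_one]
  obtain ⟨p, μ, h0, h1, hdvd⟩ := aux_reduce k T α c₁ (ne_of_gt hα) hc (ne_of_gt hc₁pos)
    hTdvd r (by omega)
  refine ⟨p, μ, ?_, ?_, ?_⟩
  · rw [← coeff_zero_eq_eval_zero]; exact h0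
  · rw [← coeff_zero_eq_eval_zero, coeff_derivative]
    rw [show (0:ℕ) + 1 = 1 from rfl, h1]
    push_cast
    simpa using hc₁pos
  · -- asymptotics
    have hkr : k + 1 + r = (n - 1) + 1 := by omega
    have hn1 : n = (n - 1) + 1 := by omega
    obtain ⟨g, hg⟩ := hdvd
    -- decompose
    have hdecomp : ∀ x : ℝ, p.derivative.eval x * Y x
          - ((p.eval x) ^ (k + 1 + 1) + μ * (p.eval x) ^ (2 * (k + 1) + 1))
        = p.derivative.eval x * (Y x - T.eval x)
          + x ^ (k + 1 + r + 1) * g.eval x := by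
      intro x
      have := congrArg (eval x) hg
      simp only [eval_mul, eval_sub, eval_pow, eval_C, eval_X] at this
      nlinarith [this]
    have goal_eq : ∀ x : ℝ, p.derivative.eval x * Y x
          - ((p.eval x) ^ (k + 1 + 1) + μ * (p.eval x) ^ (2 * (k + 1) + 1))
        = p.derivative.eval x * (Y x - T.eval x) + x ^ (k + 1 + r + 1) * g.eval x := hdecomp
    have hpart1 : (fun x : ℝ => p.derivative.eval x * (Y x - T.eval x))
        =o[nhdsWithin 0 (Set.Ioi 0)] fun x : ℝ => x ^ (k + 1 + r) := by
      have hbig : (fun x : ℝ => p.derivative.eval x)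
          =O[nhdsWithin 0 (Set.Ioi 0)] (fun _ : ℝ => (1:ℝ)) := by
        exact Filter.Tendsto.isBigO_one ℝ
          ((p.derivative.continuous_aeval.tendsto 0).mono_left nhdsWithin_le_nhds)
      have hpe : (fun x : ℝ => Y x - T.eval x)
          =o[nhdsWithin 0 (Set.Ioi 0)] fun x : ℝ => x ^ (k + 1 + r) := by
        have hpeano := aux_peano (n - 1) ε hε Y (by rw [← hn1]; exact hY)
        have hTsum : ∀ x : ℝ, T.eval x = ∑ j ∈ Finset.range ((n - 1) + 2),
            (iteratedDerivWithin j Y (Set.Ico 0 ε) 0 / j.factorial) * x ^ j := by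
          intro x
          rw [hT]
          rw [show (n - 1) + 2 = n + 1 by omega]
          simp [eval_finset_sum, hd]
        rw [hkr]
        refine hpeano.congr' ?_ (by rfl)
        filter_upwards with x
        rw [hTsum]
      have := hbig.mul_isLittleO hpe
      simpa using this
    have hpart2 : (fun x : ℝ => x ^ (k + 1 + r + 1) * g.eval x)
        =o[nhdsWithin 0 (Set.Ioi 0)] fun x : ℝ => x ^ (k + 1 + r) := by
      have htend : Filter.Tendsto (fun x : ℝ => x * g.eval x)
          (nhdsWithin 0 (Set.Ioi 0)) (nhds 0) := by
        have hcont : Continuous (fun x : ℝ => x * g.eval x) :=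
          continuous_id.mul g.continuous_aeval
        have := (hcont.tendsto 0).mono_left (nhdsWithin_le_nhds (s := Set.Ioi (0:ℝ)))
        simpa using this
      have hsmall : (fun x : ℝ => x * g.eval x)
          =o[nhdsWithin 0 (Set.Ioi 0)] (fun _ : ℝ => (1:ℝ)) :=
        (Asymptotics.isLittleO_one_iff ℝ).2 htend
      have := (Asymptotics.isBigO_refl (fun x : ℝ => x ^ (k + 1 + r))
        (nhdsWithin 0 (Set.Ioi 0))).mul_isLittleO hsmall
      refine this.congr' ?_ (by filter_upwards with x; simp)
      filter_upwards with x
      ring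
    have := hpart1.add hpart2
    refine this.congr' ?_ (by rfl)
    filter_upwards with x
    rw [show 2 * (k + 1) + 1 = 2 * (k + 1) + 1 from rfl]
    exact (goal_eq x).symm
end

section
/- Let r ≥ 1 be an integer, θ ≠ 0 a real number, and ε > 0. Let φ : [0,ε) → ℝ be continuous with φ(0) = 1 and differentiable on (0,ε), and suppose that the map x ↦ x·φ(x) is of class C^r on [0,ε). Then there exists δ > 0 such that the map x ↦ x·(φ(x))^θ is of class C^r on [0,δ) (note that φ > 0 near 0 by continuity, so the real power (φ(x))^θ is well defined there). -/
open Set Filter Real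
open scoped Topology

private lemma natCast_ne_omega (m : ℕ) : (m : WithTop ℕ∞) ≠ ⊤ := by
  simp

/-- Iterated derivative (within a set with unique diff) of a polynomial written as a sum. -/
private lemma polyIter (a : ℕ → ℝ) (N : ℕ) {s : Set ℝ} (hs : UniqueDiffOn ℝ s) :
    ∀ (j : ℕ), ∀ x ∈ s, iteratedDerivWithin j (fun y => ∑ k ∈ Finset.range N, a k * y ^ k) s x
      = ∑ k ∈ Finset.range N, a k * (k.descFactorial j) * x ^ (k - j) := by
  intro j
  induction j with
  | zero => intro x hx; simp
  | succ j ih =>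
    intro x hx
    rw [iteratedDerivWithin_succ]
    rw [derivWithin_congr (fun y hy => ih y hy) (ih x hx)]
    have hD : HasDerivAt
        (fun y : ℝ => ∑ k ∈ Finset.range N, a k * (k.descFactorial j) * y ^ (k - j))
        (∑ k ∈ Finset.range N, a k * (k.descFactorial j) * ((k - j : ℕ) * x ^ (k - j - 1))) x := by
      apply HasDerivAt.fun_sum
      intro k _
      simpa using (hasDerivAt_pow (k - j) x).const_mul (a k * (k.descFactorial j))
    rw [hD.hasDerivWithinAt.derivWithin (hs.uniqueDiffWithinAt hx)]
    apply Finset.sum_congr rfl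
    intro k _
    have h1 : (k.descFactorial (j+1) : ℝ) = (k.descFactorial j : ℝ) * ((k - j : ℕ) : ℝ) := by
      rw [Nat.descFactorial_succ]; push_cast; ring
    rw [h1, show k - (j+1) = k - j - 1 by omega]
    ring

/-- If `f` is `C^m` on `(0,d)` and all its derivatives up to order `m` have limits at `0⁺`,
then the function patched at `0` is `C^m` on `[0,d)`. -/
private lemma contDiffOn_Ico_of_deriv_tendsto (m : ℕ) :
    ∀ (d : ℝ) (f : ℝ → ℝ) (L : ℕ → ℝ), 0 < d →
    ContDiffOn ℝ m f (Ioo 0 d) →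
    (∀ k ≤ m, Tendsto (deriv^[k] f) (𝓝[>] (0:ℝ)) (𝓝 (L k))) →
    ContDiffOn ℝ m (fun x => if x = 0 then L 0 else f x) (Ico 0 d) := by
  induction m with
  | zero =>
    intro d f L hd hf hL
    rw [Nat.cast_zero, contDiffOn_zero] at hf ⊢
    intro x hx
    rcases eq_or_lt_of_le hx.1 with h0 | h0
    · -- x = 0
      subst h0
      have h0' : Tendsto (fun x => if x = 0 then L 0 else f x) (𝓝[Ico 0 d \ {0}] (0:ℝ))
          (𝓝 (L 0)) := by
        rw [Set.Ico_diff_left]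
        apply Tendsto.congr' _ ((hL 0 le_rfl).mono_left (nhdsWithin_mono _ Ioo_subset_Ioi_self))
        filter_upwards [self_mem_nhdsWithin] with y hy
        simp [hy.1.ne']
      have h1 : ContinuousWithinAt (fun x => if x = 0 then L 0 else f x) (Ico 0 d \ {0}) 0 := by
        unfold ContinuousWithinAt
        simpa using h0'
      exact continuousWithinAt_diff_self.mp h1
    · have hxI : x ∈ Ioo 0 d := ⟨h0, hx.2⟩
      have hne : (fun x => if x = 0 then L 0 else f x) =ᶠ[𝓝 x] f := by
        filter_upwards [eventually_ne_nhds h0.ne'] with y hy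
        simp [hy]
      have hfx : ContinuousAt f x := hf.continuousAt (isOpen_Ioo.mem_nhds hxI)
      exact (hfx.congr hne.symm).continuousWithinAt
  | succ m ih =>
    intro d f L hd hf hL
    set F : ℝ → ℝ := fun x => if x = 0 then L 0 else f x with hF
    have h0mem : (0:ℝ) ∈ Ico 0 d := ⟨le_rfl, hd⟩
    have hIoo : EqOn F f (Ioo 0 d) := fun y hy => by simp [hF, hy.1.ne']
    have hone : (1 : WithTop ℕ∞) ≤ (m + 1 : ℕ) := by exact_mod_cast m.succ_pos
    have hFne : ∀ x : ℝ, 0 < x → F =ᶠ[𝓝 x] f := by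
      intro x hx
      filter_upwards [eventually_ne_nhds hx.ne'] with y hy
      simp [hF, hy]
    have h01 : HasDerivWithinAt F (L 1) (Ici 0) 0 := by
      apply hasDerivWithinAt_Ici_of_tendsto_deriv (s := Ioo 0 d)
      · exact (hf.differentiableOn (lt_of_lt_of_le zero_lt_one hone).ne').congr hIoo
      · unfold ContinuousWithinAt
        have : F 0 = L 0 := by simp [hF]
        rw [this]
        apply Tendsto.congr' _
          ((hL 0 (by omega)).mono_left (nhdsWithin_mono _ Ioo_subset_Ioi_self))
        filter_upwards [self_mem_nhdsWithin] with y hy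
        simp [hF, hy.1.ne']
      · exact Ioo_mem_nhdsGT_of_mem ⟨le_rfl, hd⟩
      · apply Tendsto.congr' _ (by simpa using hL 1 (by omega))
        filter_upwards [self_mem_nhdsWithin] with y hy
        exact ((hFne y hy).deriv_eq).symm
    have hdiff : DifferentiableOn ℝ F (Ico 0 d) := by
      intro x hx
      rcases eq_or_lt_of_le hx.1 with h0 | h0
      · subst h0
        exact (h01.mono Ico_subset_Ici_self).differentiableWithinAt
      · have hxI : x ∈ Ioo 0 d := ⟨h0, hx.2⟩
        have hfx : DifferentiableAt ℝ f x :=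
          (hf.differentiableOn (lt_of_lt_of_le zero_lt_one hone).ne').differentiableAt (isOpen_Ioo.mem_nhds hxI)
        exact (hfx.congr_of_eventuallyEq (hFne x h0)).differentiableWithinAt
    have key : ContDiffOn ℝ m (derivWithin F (Ico 0 d)) (Ico 0 d) := by
      have ihh := ih d (deriv f) (fun k => L (k+1)) hd
        (hf.deriv_of_isOpen isOpen_Ioo (by exact_mod_cast le_rfl))
        (fun k hk => by
          have h := hL (k+1) (by omega)
          rwa [Function.iterate_succ_apply] at h)
      apply ihh.congr
      intro x hx
      rcases eq_or_lt_of_le hx.1 with h0 | h0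
      · subst h0
        simp only [if_pos rfl]
        exact (h01.mono Ico_subset_Ici_self).derivWithin ((uniqueDiffOn_Ico 0 d) 0 h0mem)
      · have hxI : x ∈ Ioo 0 d := ⟨h0, hx.2⟩
        rw [derivWithin_of_mem_nhds (Filter.mem_of_superset (isOpen_Ioo.mem_nhds hxI)
          Ioo_subset_Ico_self)]
        rw [(hFne x h0).deriv_eq, if_neg h0.ne']
    rw [show ((m+1 : ℕ) : WithTop ℕ∞) = (m : WithTop ℕ∞) + 1 by push_cast; rfl]
    exact (contDiffOn_succ_iff_derivWithin (uniqueDiffOn_Ico 0 d)).2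
      ⟨hdiff, fun h => absurd h (natCast_ne_omega m), key⟩

/-- Hadamard-type lemma: if `R` is `C^n` on `[0,d)` with all derivatives up to order `n`
vanishing at `0`, then `x ↦ R x / x` is `C^(n-1)` on `[0,d)`. -/
private lemma hadamard (n : ℕ) (hn : 1 ≤ n) (d : ℝ) (hd : 0 < d) (R : ℝ → ℝ)
    (hR : ContDiffOn ℝ n R (Ico 0 d))
    (h0 : ∀ j ≤ n, iteratedDerivWithin j R (Ico 0 d) 0 = 0) :
    ContDiffOn ℝ (↑(n-1)) (fun x => R x / x) (Ico 0 d) := by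
  set A : ℕ → ℝ → ℝ := fun j => iteratedDerivWithin j R (Ico 0 d) with hA
  have udo : UniqueDiffOn ℝ (Ico (0:ℝ) d) := uniqueDiffOn_Ico 0 d
  -- interior derivatives of the iterated derivatives
  have hb : ∀ j < n, ∀ x ∈ Ioo (0:ℝ) d, HasDerivAt (A j) (A (j+1) x) x := by
    intro j hj x hx
    have hxI : x ∈ Ico (0:ℝ) d := Ioo_subset_Ico_self hx
    have hdw : HasDerivWithinAt (A j) (derivWithin (A j) (Ico 0 d) x) (Ico 0 d) x :=
      ((hR.differentiableOn_iteratedDerivWithin (by exact_mod_cast hj) udo) x hxI).hasDerivWithinAt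
    rw [← iteratedDerivWithin_succ] at hdw
    exact hdw.hasDerivAt (Filter.mem_of_superset (isOpen_Ioo.mem_nhds hx) Ioo_subset_Ico_self)
  -- uniform bounds on the iterated derivatives near 0
  have ha : ∀ η > (0:ℝ), ∃ δ, 0 < δ ∧ δ ≤ d ∧ ∀ j ≤ n, ∀ x ∈ Ico (0:ℝ) δ,
      |A j x| ≤ η * x ^ (n - j) := by
    intro η ηpos
    have hc : ContinuousWithinAt (A n) (Ico 0 d) 0 :=
      (hR.continuousOn_iteratedDerivWithin le_rfl udo) 0 ⟨le_rfl, hd⟩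
    have h1 : Tendsto (A n) (𝓝[Ico 0 d] (0:ℝ)) (𝓝 0) := by
      have h2 := hc.tendsto
      rwa [show A n 0 = 0 from h0 n le_rfl] at h2
    have habs : ∀ᶠ y in 𝓝 (0:ℝ), |y| < η := by
      filter_upwards [Metric.ball_mem_nhds (0:ℝ) ηpos] with y hy
      simpa [Real.dist_eq] using hy
    have hev : {x | |A n x| < η} ∈ 𝓝[Ico 0 d] (0:ℝ) := h1.eventually habs
    rw [Metric.mem_nhdsWithin_iff] at hev
    obtain ⟨δ₀, hδ₀, hsub⟩ := hev
    refine ⟨min δ₀ d, lt_min hδ₀ hd, min_le_right _ _, ?_⟩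
    have hmem : ∀ x ∈ Ico (0:ℝ) (min δ₀ d), x ∈ Ico (0:ℝ) d ∧ |A n x| < η := by
      intro x hx
      have hxd : x ∈ Ico (0:ℝ) d := ⟨hx.1, lt_of_lt_of_le hx.2 (min_le_right _ _)⟩
      refine ⟨hxd, hsub ⟨?_, hxd⟩⟩
      simpa [Metric.mem_ball, Real.dist_eq, abs_of_nonneg hx.1] using
        lt_of_lt_of_le hx.2 (min_le_left _ _)
    have key : ∀ p, p ≤ n → ∀ x ∈ Ico (0:ℝ) (min δ₀ d), |A (n - p) x| ≤ η * x ^ p := by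
      intro p
      induction p with
      | zero => intro _ x hx; simpa using ((hmem x hx).2).le
      | succ p ihp =>
        intro hpn x hx
        have hp : p ≤ n := by omega
        have hj : n - (p+1) < n := by omega
        have hIccsub : Icc (0:ℝ) x ⊆ Ico (0:ℝ) (min δ₀ d) := fun t ht =>
          ⟨ht.1, lt_of_le_of_lt ht.2 hx.2⟩
        have hders : ∀ t ∈ Icc (0:ℝ) x, HasDerivWithinAt (A (n - (p+1)))
            (A (n - p) t) (Icc 0 x) t := by
          intro t ht
          have htd : t ∈ Ico (0:ℝ) d := (hmem _ (hIccsub ht)).1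
          have hdw : HasDerivWithinAt (A (n-(p+1))) (derivWithin (A (n-(p+1))) (Ico 0 d) t)
              (Ico 0 d) t :=
            ((hR.differentiableOn_iteratedDerivWithin (by exact_mod_cast hj) udo) t
              htd).hasDerivWithinAt
          rw [← iteratedDerivWithin_succ] at hdw
          rw [show n - (p+1) + 1 = n - p by omega] at hdw
          exact hdw.mono (fun y hy => (hmem _ (hIccsub hy)).1)
        have hbound : ∀ t ∈ Icc (0:ℝ) x, ‖A (n - p) t‖ ≤ η * x ^ p := by
          intro t ht
          calc ‖A (n-p) t‖ ≤ η * t ^ p := ihp hp t (hIccsub ht)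
          _ ≤ η * x ^ p := mul_le_mul_of_nonneg_left (pow_le_pow_left₀ ht.1 ht.2 p) ηpos.le
        have hmvt := (convex_Icc (0:ℝ) x).norm_image_sub_le_of_norm_hasDerivWithin_le
          hders hbound (left_mem_Icc.mpr hx.1) (right_mem_Icc.mpr hx.1)
        rw [show A (n - (p+1)) 0 = 0 from h0 (n - (p+1)) (by omega)] at hmvt
        calc |A (n - (p+1)) x| = ‖A (n - (p+1)) x - 0‖ := by simp
        _ ≤ η * x ^ p * ‖x - 0‖ := hmvt
        _ = η * x ^ (p+1) := by
            rw [sub_zero, Real.norm_eq_abs, abs_of_nonneg hx.1, pow_succ]; ring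
    intro j hj x hx
    have h3 := key (n - j) (by omega) x hx
    rwa [show n - (n - j) = j by omega] at h3
  -- explicit formula for the iterated derivatives of `R x / x` on the interior
  have hc' : ∀ k, k < n → ∃ c : ℕ → ℝ, ∀ x ∈ Ioo (0:ℝ) d,
      deriv^[k] (fun y => R y / y) x
        = ∑ j ∈ Finset.range (k+1), c j * A j x * x ^ ((j:ℤ) - (k+1)) := by
    intro k
    induction k with
    | zero =>
      refine fun _ => ⟨fun _ => 1, fun x hx => ?_⟩
      have hA0 : A 0 x = R x := by rw [hA]; simp
      simp only [Function.iterate_zero, id_eq, zero_add, Finset.sum_range_one, one_mul,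
        Nat.cast_zero, zero_sub, zpow_neg, zpow_one]
      rw [hA0, div_eq_mul_inv]
    | succ k ihk =>
      intro hk1
      obtain ⟨c, hc⟩ := ihk (by omega)
      refine ⟨fun j => (if j = 0 then 0 else c (j-1)) + c j * ((j:ℝ) - (k+1)),
        fun x hx => ?_⟩
      have hx0 : x ≠ 0 := ne_of_gt hx.1
      have hder : HasDerivAt
          (fun y => ∑ j ∈ Finset.range (k+1), c j * A j y * y ^ ((j:ℤ) - (k+1)))
          (∑ j ∈ Finset.range (k+1),
            ((c j * A (j+1) x) * x ^ ((j:ℤ) - (k+1))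
              + (c j * A j x) * ((((j:ℤ) - (k+1) : ℤ) : ℝ) * x ^ ((j:ℤ) - (k+1) - 1)))) x := by
        apply HasDerivAt.fun_sum
        intro j hj
        have hjk : j ≤ k := Nat.lt_succ_iff.mp (Finset.mem_range.mp hj)
        have hAj : HasDerivAt (fun y => c j * A j y) (c j * A (j+1) x) x :=
          (hb j (by omega) x hx).const_mul (c j)
        exact hAj.mul (hasDerivAt_zpow ((j:ℤ) - (k+1)) x (Or.inl hx0))
      rw [Function.iterate_succ_apply']
      have heq : deriv (deriv^[k] (fun y => R y / y)) x
          = deriv (fun y => ∑ j ∈ Finset.range (k+1), c j * A j y * y ^ ((j:ℤ) - (k+1))) x := by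
        apply Filter.EventuallyEq.deriv_eq
        filter_upwards [isOpen_Ioo.mem_nhds hx] with y hy
        exact hc y hy
      rw [heq, hder.deriv]
      -- algebraic rearrangement
      rw [Finset.sum_add_distrib]
      have hsum1 : ∑ j ∈ Finset.range (k+1+1),
            (if j = 0 then 0 else c (j-1)) * A j x * x ^ ((j:ℤ) - (k+1+1))
          = ∑ j ∈ Finset.range (k+1), (c j * A (j+1) x) * x ^ ((j:ℤ) - (k+1)) := by
        rw [Finset.sum_range_succ']
        have hterm0 : (if (0:ℕ) = 0 then (0:ℝ) else c (0-1)) * A 0 x * x ^ (((0:ℕ):ℤ) - ((k:ℤ)+1+1))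
            = 0 := by simp
        rw [hterm0, add_zero]
        apply Finset.sum_congr rfl
        intro i _
        rw [if_neg (Nat.succ_ne_zero i), Nat.add_sub_cancel]
        rw [show ((i+1:ℕ):ℤ) - ((k:ℤ)+1+1) = (i:ℤ) - ((k:ℤ)+1) by push_cast; ring]
      have hsum2 : ∑ j ∈ Finset.range (k+1+1),
            (c j * ((j:ℝ) - (k+1))) * A j x * x ^ ((j:ℤ) - (k+1+1))
          = ∑ j ∈ Finset.range (k+1),
            (c j * A j x) * ((((j:ℤ) - (k+1) : ℤ) : ℝ) * x ^ ((j:ℤ) - (k+1) - 1)) := by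
        rw [Finset.sum_range_succ]
        have hz2 : ((k+1:ℕ):ℝ) - ((k:ℝ)+1) = 0 := by push_cast; ring
        rw [hz2]
        simp only [mul_zero, zero_mul, add_zero]
        apply Finset.sum_congr rfl
        intro i _
        rw [show (i:ℤ) - ((k:ℤ)+1+1) = (i:ℤ) - ((k:ℤ)+1) - 1 by ring]
        push_cast
        ring
      rw [← hsum1, ← hsum2, ← Finset.sum_add_distrib]
      apply Finset.sum_congr rfl
      intro i _
      push_cast
      ring
  -- limits of the iterated derivatives at 0⁺
  have hdlim : ∀ k, k ≤ n - 1 → Tendsto (deriv^[k] (fun y => R y / y)) (𝓝[>] (0:ℝ)) (𝓝 0) := by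
    intro k hk
    obtain ⟨c, hc⟩ := hc' k (by omega)
    set C := ∑ j ∈ Finset.range (k+1), |c j| with hC
    have hC0 : 0 ≤ C := Finset.sum_nonneg (fun j _ => abs_nonneg _)
    rw [NormedAddCommGroup.tendsto_nhds_zero]
    intro ε' hε'
    set η := ε' / (C + 1) with hη
    have hηpos : 0 < η := div_pos hε' (by linarith)
    obtain ⟨δ, hδpos, hδd, hδ⟩ := ha η hηpos
    filter_upwards [Ioo_mem_nhdsGT (lt_min hδpos one_pos)] with x hx
    have hx0 : 0 < x := hx.1
    have hx1 : x ≤ 1 := le_of_lt (lt_of_lt_of_le hx.2 (min_le_right _ _))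
    have hxδ : x ∈ Ico (0:ℝ) δ := ⟨hx0.le, lt_of_lt_of_le hx.2 (min_le_left _ _)⟩
    have hxd : x ∈ Ioo (0:ℝ) d := ⟨hx0, lt_of_lt_of_le hxδ.2 hδd⟩
    rw [Real.norm_eq_abs, hc x hxd]
    have hterm : ∀ j ∈ Finset.range (k+1),
        |c j * A j x * x ^ ((j:ℤ) - (k+1))| ≤ |c j| * η := by
      intro j hj
      have hjk : j ≤ k := Nat.lt_succ_iff.mp (Finset.mem_range.mp hj)
      have hjn : j ≤ n := by omega
      have hAb : |A j x| ≤ η * x ^ (n - j) := hδ j hjn x hxδ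
      have hxz : (0:ℝ) < x ^ ((j:ℤ) - (k+1)) := zpow_pos hx0 _
      have hcomb : (x:ℝ) ^ ((n - j : ℕ)) * x ^ ((j:ℤ) - (k+1)) = x ^ (n - 1 - k : ℕ) := by
        rw [← zpow_natCast x (n - j), ← zpow_natCast x (n - 1 - k), ← zpow_add₀ hx0.ne']
        congr 1
        rw [Nat.cast_sub hjn, Nat.cast_sub (by omega : k ≤ n - 1),
          Nat.cast_sub (by omega : 1 ≤ n)]
        push_cast
        ring
      have hxm1 : x ^ (n - 1 - k : ℕ) ≤ 1 := pow_le_one₀ hx0.le hx1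
      rw [abs_mul, abs_mul, abs_of_pos hxz]
      calc |c j| * |A j x| * x ^ ((j:ℤ) - (k+1))
          ≤ |c j| * (η * x ^ (n - j)) * x ^ ((j:ℤ) - (k+1)) :=
            mul_le_mul_of_nonneg_right (mul_le_mul_of_nonneg_left hAb (abs_nonneg _)) hxz.le
        _ = |c j| * η * (x ^ ((n - j : ℕ)) * x ^ ((j:ℤ) - (k+1))) := by ring
        _ = |c j| * η * x ^ (n - 1 - k : ℕ) := by rw [hcomb]
        _ ≤ |c j| * η * 1 := by
            apply mul_le_mul_of_nonneg_left hxm1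
            positivity
        _ = |c j| * η := by ring
    calc |∑ j ∈ Finset.range (k+1), c j * A j x * x ^ ((j:ℤ) - (k+1))|
        ≤ ∑ j ∈ Finset.range (k+1), |c j * A j x * x ^ ((j:ℤ) - (k+1))| :=
          Finset.abs_sum_le_sum_abs _ _
      _ ≤ ∑ j ∈ Finset.range (k+1), |c j| * η := Finset.sum_le_sum hterm
      _ = C * η := by rw [← Finset.sum_mul]
      _ < (C + 1) * η := mul_lt_mul_of_pos_right (lt_add_one C) hηpos
      _ = ε' := by
          rw [hη]
          field_simp
  -- conclude
  have hIooC : ContDiffOn ℝ (↑(n-1)) (fun y => R y / y) (Ioo 0 d) := by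
    apply ContDiffOn.div ((hR.mono Ioo_subset_Ico_self).of_le
      (by exact_mod_cast Nat.sub_le n 1)) contDiffOn_id
    exact fun x hx => ne_of_gt hx.1
  have hfin := contDiffOn_Ico_of_deriv_tendsto (n-1) d (fun y => R y / y) (fun _ => 0) hd
    hIooC (fun k hk => hdlim k hk)
  apply hfin.congr
  intro x hx
  rcases eq_or_lt_of_le hx.1 with hx0 | hx0
  · rw [← hx0]
    simp
  · rw [if_neg hx0.ne']

/-- If `φ` is continuous with `φ(0) = 1`, differentiable away from `0`, and `x ↦ x·φ(x)` is
of class `C^r` on `[0,ε)`, then `x ↦ x·(φ(x))^θ` is of class `C^r` on some `[0,δ)`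
(here `t^θ` is the real power, `Real.rpow`). -/
theorem stmt_18 (r : ℕ) (hr : 1 ≤ r) (θ : ℝ) (hθ : θ ≠ 0) (ε : ℝ) (hε : 0 < ε)
    (φ : ℝ → ℝ)
    (hφc : ContinuousOn φ (Set.Ico 0 ε)) (hφ0 : φ 0 = 1)
    (hφd : DifferentiableOn ℝ φ (Set.Ioo 0 ε))
    (hu : ContDiffOn ℝ (r : ℕ) (fun x : ℝ => x * φ x) (Set.Ico 0 ε)) :
    ∃ δ : ℝ, 0 < δ ∧ δ ≤ ε ∧
      ContDiffOn ℝ (r : ℕ) (fun x : ℝ => x * (φ x) ^ θ) (Set.Ico 0 δ) := by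
  have udo : UniqueDiffOn ℝ (Ico (0:ℝ) ε) := uniqueDiffOn_Ico 0 ε
  have h0S : (0:ℝ) ∈ Ico (0:ℝ) ε := ⟨le_rfl, hε⟩
  set u : ℝ → ℝ := fun x => x * φ x with huDef
  have hu0 : u 0 = 0 := by simp [huDef]
  have hφt : Tendsto φ (𝓝[Ico (0:ℝ) ε] (0:ℝ)) (𝓝 1) := by
    have h := (hφc 0 h0S).tendsto
    rwa [hφ0] at h
  have hφt' : Tendsto φ (𝓝[Ico (0:ℝ) ε \ {0}] (0:ℝ)) (𝓝 1) :=
    hφt.mono_left (nhdsWithin_mono _ diff_subset)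
  have hder0 : HasDerivWithinAt u 1 (Ico (0:ℝ) ε) 0 := by
    rw [hasDerivWithinAt_iff_tendsto_slope]
    apply Tendsto.congr' _ hφt'
    filter_upwards [self_mem_nhdsWithin] with y hy
    have hy0 : y ≠ 0 := by simpa using hy.2
    rw [slope_def_field, hu0, huDef]
    field_simp
    ring
  have hA1u : iteratedDerivWithin 1 u (Ico (0:ℝ) ε) 0 = 1 := by
    rw [iteratedDerivWithin_one]
    exact hder0.derivWithin (udo 0 h0S)
  set a : ℕ → ℝ := fun k => iteratedDerivWithin k u (Ico (0:ℝ) ε) 0 / (Nat.factorial k) with haDef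
  have ha0 : a 0 = 0 := by simp [haDef, hu0]
  have ha1 : a 1 = 1 := by simp [haDef, hA1u]
  set P : ℝ → ℝ := fun y => ∑ k ∈ Finset.range (r+1), a k * y ^ k with hPdef
  have hPsm : ∀ (N : WithTop ℕ∞), ContDiff ℝ N P := fun N =>
    ContDiff.sum (fun k _ => contDiff_const.mul (contDiff_id.pow k))
  set R : ℝ → ℝ := u - P with hRdef
  have hRC : ContDiffOn ℝ (r:ℕ) R (Ico (0:ℝ) ε) := hu.sub ((hPsm _).contDiffOn)
  have hPit : ∀ j, j ≤ r → iteratedDerivWithin j P (Ico (0:ℝ) ε) 0 = (Nat.factorial j : ℝ) * a j := by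
    intro j hj
    rw [hPdef]
    rw [polyIter a (r+1) udo j 0 h0S]
    rw [Finset.sum_eq_single j]
    · rw [Nat.descFactorial_self, Nat.sub_self, pow_zero]
      ring
    · intro b hb hbj
      rcases lt_or_gt_of_ne hbj with hlt | hgt
      · rw [show (b.descFactorial j : ℝ) = 0 by
          exact_mod_cast congrArg Nat.cast (Nat.descFactorial_eq_zero_iff_lt.mpr hlt)]
        ring
      · rw [zero_pow (by omega : b - j ≠ 0)]
        ring
    · intro hj'
      exact absurd (Finset.mem_range.mpr (by omega)) hj'
  have hRj0 : ∀ j, j ≤ r → iteratedDerivWithin j R (Ico (0:ℝ) ε) 0 = 0 := by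
    intro j hj
    have hfac : (Nat.factorial j : ℝ) ≠ 0 := Nat.cast_ne_zero.mpr (Nat.factorial_ne_zero j)
    rw [hRdef, iteratedDerivWithin_sub h0S udo
      (hu.of_le (show ((j:ℕ) : WithTop ℕ∞) ≤ (r:ℕ) by exact_mod_cast hj) 0 h0S) ((hPsm _).contDiffOn 0 h0S), hPit j hj, haDef]
    field_simp
    ring
  have hhad := hadamard r hr ε hε R hRC hRj0
  set Q : ℝ → ℝ := fun y => ∑ k ∈ Finset.range r, a (k+1) * y ^ k with hQdef
  have hQsm : ∀ (N : WithTop ℕ∞), ContDiff ℝ N Q := fun N =>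
    ContDiff.sum (fun k _ => contDiff_const.mul (contDiff_id.pow k))
  have hQ0 : Q 0 = 1 := by
    rw [hQdef]
    show ∑ k ∈ Finset.range r, a (k+1) * (0:ℝ) ^ k = 1
    rw [Finset.sum_eq_single 0]
    · rw [ha1, pow_zero]; ring
    · intro b _ hb
      rw [zero_pow hb]; ring
    · intro hb
      exact absurd (Finset.mem_range.mpr (by omega)) hb
  have hPQ : ∀ y : ℝ, P y = y * Q y := by
    intro y
    show (∑ k ∈ Finset.range (r+1), a k * y ^ k) = y * ∑ k ∈ Finset.range r, a (k+1) * y ^ k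
    rw [Finset.sum_range_succ' (fun k => a k * y ^ k) r]
    rw [ha0, Finset.mul_sum]
    simp only [zero_mul, add_zero]
    apply Finset.sum_congr rfl
    intro i _
    ring
  have hφdecomp : ∀ x ∈ Ico (0:ℝ) ε, φ x = Q x + R x / x := by
    intro x hx
    rcases eq_or_lt_of_le hx.1 with h0 | h0
    · rw [← h0, hφ0, hQ0, div_zero, add_zero]
    · have hx0 : x ≠ 0 := h0.ne'
      have hRx : R x = u x - P x := rfl
      have hux : u x = x * φ x := rfl
      rw [hRx, hPQ x, hux]
      field_simp
      ring
  have hφC : ContDiffOn ℝ (↑(r-1)) φ (Ico (0:ℝ) ε) :=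
    ContDiffOn.congr (((hQsm _).contDiffOn).add hhad) hφdecomp
  set v : ℝ → ℝ := derivWithin u (Ico (0:ℝ) ε) with hvDef
  have hvC : ContDiffOn ℝ (↑(r-1)) v (Ico (0:ℝ) ε) :=
    hu.derivWithin udo (by exact_mod_cast (by omega : r - 1 + 1 ≤ r))
  have hv0 : v 0 = 1 := hder0.derivWithin (udo 0 h0S)
  have hφdiffAt : ∀ x ∈ Ioo (0:ℝ) ε, DifferentiableAt ℝ φ x := fun x hx =>
    (hφd x hx).differentiableAt (isOpen_Ioo.mem_nhds hx)
  have hvf : ∀ x ∈ Ioo (0:ℝ) ε, v x = φ x + x * deriv φ x := by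
    intro x hx
    rw [hvDef, derivWithin_of_mem_nhds (Filter.mem_of_superset (isOpen_Ioo.mem_nhds hx)
      Ioo_subset_Ico_self)]
    have hD : HasDerivAt u (1 * φ x + x * deriv φ x) x :=
      (hasDerivAt_id x).mul ((hφdiffAt x hx).hasDerivAt)
    rw [hD.deriv]
    ring
  obtain ⟨δ, hδpos, hδε, hδφ⟩ : ∃ δ, 0 < δ ∧ δ ≤ ε ∧ ∀ x ∈ Ico (0:ℝ) δ, 0 < φ x := by
    have hev : {x | 0 < φ x} ∈ 𝓝[Ico (0:ℝ) ε] (0:ℝ) :=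
      hφt.eventually (eventually_gt_nhds one_pos)
    rw [Metric.mem_nhdsWithin_iff] at hev
    obtain ⟨δ₀, hδ₀, hsub⟩ := hev
    refine ⟨min δ₀ ε, lt_min hδ₀ hε, min_le_right _ _, fun x hx =>
      hsub ⟨?_, hx.1, lt_of_lt_of_le hx.2 (min_le_right _ _)⟩⟩
    simpa [Metric.mem_ball, Real.dist_eq, abs_of_nonneg hx.1] using
      lt_of_lt_of_le hx.2 (min_le_left _ _)
  refine ⟨δ, hδpos, hδε, ?_⟩
  have hsubS : Ico (0:ℝ) δ ⊆ Ico (0:ℝ) ε := fun x hx => ⟨hx.1, lt_of_lt_of_le hx.2 hδε⟩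
  have udoδ : UniqueDiffOn ℝ (Ico (0:ℝ) δ) := uniqueDiffOn_Ico 0 δ
  have h0δ : (0:ℝ) ∈ Ico (0:ℝ) δ := ⟨le_rfl, hδpos⟩
  set g : ℝ → ℝ := fun x => x * φ x ^ θ with hgdef
  have hgint : ∀ x ∈ Ioo (0:ℝ) δ,
      HasDerivAt g (1 * φ x ^ θ + x * (deriv φ x * θ * φ x ^ (θ - 1))) x := by
    intro x hx
    have hxε : x ∈ Ioo (0:ℝ) ε := ⟨hx.1, lt_of_lt_of_le hx.2 hδε⟩
    have hφpos : 0 < φ x := hδφ x (Ioo_subset_Ico_self hx)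
    exact (hasDerivAt_id x).mul (((hφdiffAt x hxε).hasDerivAt).rpow_const (Or.inl hφpos.ne'))
  have hg0 : HasDerivWithinAt g 1 (Ico (0:ℝ) δ) 0 := by
    rw [hasDerivWithinAt_iff_tendsto_slope]
    have hφt2 : Tendsto φ (𝓝[Ico (0:ℝ) δ \ {0}] (0:ℝ)) (𝓝 1) :=
      hφt'.mono_left (nhdsWithin_mono _ (fun y hy => ⟨hsubS hy.1, hy.2⟩))
    have hrpow : Tendsto (fun y => φ y ^ θ) (𝓝[Ico (0:ℝ) δ \ {0}] (0:ℝ)) (𝓝 1) := by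
      have hcont : ContinuousAt (fun t : ℝ => t ^ θ) 1 :=
        Real.continuousAt_rpow_const 1 θ (Or.inl one_ne_zero)
      have h2 := hcont.tendsto.comp hφt2
      rwa [Real.one_rpow] at h2
    apply Tendsto.congr' _ hrpow
    filter_upwards [self_mem_nhdsWithin] with y hy
    have hy0 : y ≠ 0 := by simpa using hy.2
    have hgy : g y = y * φ y ^ θ := rfl
    have hg00 : g 0 = 0 := by simp [hgdef]
    rw [slope_def_field, hg00, hgy]
    field_simp
    ring
  have hgdiff : DifferentiableOn ℝ g (Ico (0:ℝ) δ) := by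
    intro x hx
    rcases eq_or_lt_of_le hx.1 with h0 | h0
    · exact h0 ▸ hg0.differentiableWithinAt
    · exact ((hgint x ⟨h0, hx.2⟩).differentiableAt).differentiableWithinAt
  set G : ℝ → ℝ := fun x => θ * v x * φ x ^ (θ - 1) + (1 - θ) * φ x ^ θ with hGdef
  have hGeq : ∀ x ∈ Ico (0:ℝ) δ, derivWithin g (Ico (0:ℝ) δ) x = G x := by
    intro x hx
    rcases eq_or_lt_of_le hx.1 with h0 | h0
    · rw [← h0, hg0.derivWithin (udoδ 0 h0δ), hGdef]
      simp only [hv0, hφ0, Real.one_rpow]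
      ring
    · have hxI : x ∈ Ioo (0:ℝ) δ := ⟨h0, hx.2⟩
      have hxε : x ∈ Ioo (0:ℝ) ε := ⟨h0, lt_of_lt_of_le hx.2 hδε⟩
      have hφpos : 0 < φ x := hδφ x hx
      rw [derivWithin_of_mem_nhds (Filter.mem_of_superset (isOpen_Ioo.mem_nhds hxI)
        Ioo_subset_Ico_self)]
      rw [(hgint x hxI).deriv]
      have hGx : G x = θ * v x * φ x ^ (θ - 1) + (1 - θ) * φ x ^ θ := rfl
      rw [hGx, hvf x hxε]
      have hpow : φ x ^ θ = φ x ^ (θ - 1) * φ x := by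
        have h3 := Real.rpow_add hφpos (θ-1) 1
        rw [Real.rpow_one] at h3
        rw [show θ - 1 + 1 = θ by ring] at h3
        exact h3
      rw [hpow]
      ring
  have hGC : ContDiffOn ℝ (↑(r-1)) G (Ico (0:ℝ) δ) := by
    have hφδ : ContDiffOn ℝ (↑(r-1)) φ (Ico (0:ℝ) δ) := hφC.mono hsubS
    have hvδ : ContDiffOn ℝ (↑(r-1)) v (Ico (0:ℝ) δ) := hvC.mono hsubS
    have hne : ∀ x ∈ Ico (0:ℝ) δ, φ x ≠ 0 := fun x hx => (hδφ x hx).ne'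
    exact ((contDiffOn_const.mul hvδ).mul (hφδ.rpow_const_of_ne hne)).add
      (contDiffOn_const.mul (hφδ.rpow_const_of_ne hne))
  have hfinal : ContDiffOn ℝ ((↑(r-1) : WithTop ℕ∞) + 1) g (Ico (0:ℝ) δ) := by
    rw [contDiffOn_succ_iff_derivWithin udoδ]
    exact ⟨hgdiff, fun hω => absurd hω (natCast_ne_omega _), hGC.congr hGeq⟩
  rwa [show ((↑(r-1) : WithTop ℕ∞) + 1) = ((r:ℕ) : WithTop ℕ∞) by
    exact_mod_cast congrArg (Nat.cast : ℕ → WithTop ℕ∞) (Nat.sub_add_cancel hr)] at hfinal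
end
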